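/- arXiv:2504.05529 — 4 statements merged into one kernel-verified Lean document; each statement's English description precedes it below -/
import Mathlib

section
/- Let R be a commutative ring, M an R-module with a finite free presentation, and φ: R → S a ring morphism. Then for every k ≥ 0, the kth Fitting ideal of S ⊗_R M over S equals the ideal of S generated by φ applied to the kth Fitting ideal of M over R. -/
/-- The `k`-th determinantal ideal of a matrix: the ideal generated by its `k × k`
minors (with the conventions `D_0 = R` and `D_k = 0` for `k > min(m,n)`). -/
def detIdeal {R : Type*} [CommRing R] {m n : ℕ} (k : ℕ) (A : Matrix (Fin m) (Fin n) R) :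
    Ideal R :=
  Ideal.span {d | ∃ (r : Fin k → Fin m) (c : Fin k → Fin n),
    Function.Injective r ∧ Function.Injective c ∧ d = (A.submatrix r c).det}

/-- `A` is a presentation matrix for the `R`-module `M`, i.e. there is an exact sequence
`R^n → R^m → M → 0` in which the first map is given by `A`. -/
def IsPresentation {R M : Type*} [CommRing R] [AddCommGroup M] [Module R M] {m n : ℕ}
    (A : Matrix (Fin m) (Fin n) R) : Prop :=
  ∃ π : (Fin m → R) →ₗ[R] M, Function.Surjective π ∧
    LinearMap.ker π = LinearMap.range A.mulVecLin

/-- The `k`-th Fitting ideal of a finitely presented module `M`, defined via the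
determinantal ideals `D_{m-k}` of presentation matrices (all presentations give the same
ideal, so the supremum below is this common value). -/
def fittingIdeal (R M : Type*) [CommRing R] [AddCommGroup M] [Module R M] (k : ℕ) :
    Ideal R :=
  sSup {I | ∃ (m n : ℕ) (A : Matrix (Fin m) (Fin n) R),
    IsPresentation (M := M) A ∧ I = detIdeal (m - k) A}

open TensorProduct

namespace Fit
open Matrix Function
variable {R : Type*} [CommRing R] {M : Type*} [AddCommGroup M] [Module R M]

/-- Generalized determinantal ideal for matrices over arbitrary index types. -/
def dI {ι κ : Type*} (k : ℕ) (A : Matrix ι κ R) : Ideal R :=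
  Ideal.span {d | ∃ (r : Fin k → ι) (c : Fin k → κ),
    Function.Injective r ∧ Function.Injective c ∧ d = (A.submatrix r c).det}

open Matrix Function

/-- Generalized determinantal ideal for matrices over arbitrary index types. -/
lemma mem_dI {ι κ : Type*} {k : ℕ} (A : Matrix ι κ R) {r : Fin k → ι} {c : Fin k → κ}
    (hr : Function.Injective r) (hc : Function.Injective c) :
    (A.submatrix r c).det ∈ dI k A :=
  Ideal.subset_span ⟨r, c, hr, hc, rfl⟩

lemma dI_zero {ι κ : Type*} (A : Matrix ι κ R) : dI 0 A = ⊤ := by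
  rw [Ideal.eq_top_iff_one]
  have h : (A.submatrix (finZeroElim : Fin 0 → ι) finZeroElim).det = 1 := Matrix.det_fin_zero
  simpa [h] using mem_dI A (r := finZeroElim) (c := finZeroElim)
    (fun x => x.elim0) (fun x => x.elim0)

lemma dI_succ_le {ι κ : Type*} (k : ℕ) (A : Matrix ι κ R) : dI (k+1) A ≤ dI k A := by
  rw [dI, Ideal.span_le]
  rintro d ⟨r, c, hr, hc, rfl⟩
  rw [Matrix.det_succ_row_zero]
  refine Ideal.sum_mem _ fun j _ => Ideal.mul_mem_left _ _ ?_
  rw [Matrix.submatrix_submatrix]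
  exact mem_dI A (hr.comp (Fin.succ_injective _))
    (hc.comp (Fin.succAbove_right_injective (p := j)))

lemma dI_anti {ι κ : Type*} (A : Matrix ι κ R) {j k : ℕ} (h : j ≤ k) : dI k A ≤ dI j A := by
  induction h with
  | refl => exact le_rfl
  | step h ih => exact le_trans (dI_succ_le _ A) ih

lemma dI_transpose_le {ι κ : Type*} (k : ℕ) (A : Matrix ι κ R) : dI k Aᵀ ≤ dI k A := by
  rw [dI, Ideal.span_le]
  rintro d ⟨r, c, hr, hc, rfl⟩
  have : (Aᵀ.submatrix r c) = (A.submatrix c r)ᵀ := rfl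
  rw [this, Matrix.det_transpose]
  exact mem_dI A hc hr

lemma dI_transpose {ι κ : Type*} (k : ℕ) (A : Matrix ι κ R) : dI k Aᵀ = dI k A :=
  le_antisymm (dI_transpose_le k A)
    (by simpa using dI_transpose_le k Aᵀ)

lemma dI_submatrix_le {ι κ ι' κ' : Type*} (k : ℕ) (A : Matrix ι κ R)
    {e : ι' → ι} {f : κ' → κ} (he : Function.Injective e) (hf : Function.Injective f) :
    dI k (A.submatrix e f) ≤ dI k A := by
  rw [dI, Ideal.span_le]
  rintro d ⟨r, c, hr, hc, rfl⟩
  rw [Matrix.submatrix_submatrix]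
  exact mem_dI A (he.comp hr) (hf.comp hc)

lemma dI_reindex {ι κ ι' κ' : Type*} (k : ℕ) (A : Matrix ι κ R)
    (e : ι' ≃ ι) (f : κ' ≃ κ) : dI k (A.submatrix e f) = dI k A := by
  refine le_antisymm (dI_submatrix_le k A e.injective f.injective) ?_
  have : A = (A.submatrix ⇑e ⇑f).submatrix ⇑e.symm ⇑f.symm := by
    rw [Matrix.submatrix_submatrix]
    simp [Function.comp_def, Matrix.submatrix_id_id]
    rfl
  conv_lhs => rw [this]
  exact dI_submatrix_le k _ e.symm.injective f.symm.injective

open Matrix Function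

/-- If every column of `B` lies in the column space of `A`, then the determinantal
ideals of `B` are contained in those of `A`. -/
lemma dI_le_of_cols {ι κ κ' : Type*} [Fintype κ] (A : Matrix ι κ R) (B : Matrix ι κ' R)
    (h : ∀ j, ∃ w : κ → R, (fun i => B i j) = A.mulVec w) (k : ℕ) :
    dI k B ≤ dI k A := by
  classical
  rw [dI, Ideal.span_le]
  rintro d ⟨r, c, hr, hc, rfl⟩
  choose w hw using h
  -- det (B.submatrix r c) = det of transpose, whose rows are columns of B
  have hM : (B.submatrix r c).det = Matrix.detRowAlternating
      (Matrix.of fun j => ∑ b : κ, w (c j) b • fun i => A (r i) b) := by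
    rw [← Matrix.det_transpose]
    congr 1
    ext j i
    have := congrFun (hw (c j)) (r i)
    simp only [Matrix.mulVec, dotProduct] at this
    simp only [Matrix.transpose_apply, Matrix.submatrix_apply, Matrix.of_apply,
      Finset.sum_apply, Pi.smul_apply, smul_eq_mul]
    rw [this]
    exact Finset.sum_congr rfl fun b _ => mul_comm _ _
  rw [hM]
  set f := (Matrix.detRowAlternating (R := R) (n := Fin k)).toMultilinearMap with hf
  have hcoe : ⇑(Matrix.detRowAlternating (R := R) (n := Fin k)) = ⇑f :=
    (AlternatingMap.coe_multilinearMap _).symm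
  show f (fun j => ∑ b : κ, w (c j) b • fun i => A (r i) b) ∈ (dI k A : Set R)
  rw [f.map_sum (g := fun j b => w (c j) b • fun i => A (r i) b)]
  refine Ideal.sum_mem _ fun p _ => ?_
  have hsmul : f (fun j => w (c j) (p j) • fun i => A (r i) (p j))
      = (∏ j, w (c j) (p j)) • f (fun j => fun i => A (r i) (p j)) :=
    MultilinearMap.map_smul_univ _ _ _
  rw [hsmul, smul_eq_mul]
  refine Ideal.mul_mem_left _ _ ?_
  have hdet : f (fun j => fun i => A (r i) (p j)) = ((A.submatrix r p)ᵀ).det := rfl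
  rw [hdet, Matrix.det_transpose]
  by_cases hp : Function.Injective p
  · exact mem_dI A hr hp
  · rw [Function.not_injective_iff] at hp
    obtain ⟨a, b, hab, hne⟩ := hp
    rw [← Matrix.det_transpose]
    have h0 : ((A.submatrix r p)ᵀ).det = 0 := by
      refine Matrix.det_zero_of_row_eq (M := (A.submatrix r p)ᵀ) hne (funext fun i => ?_)
      show A (r i) (p a) = A (r i) (p b)
      rw [hab]
    rw [h0]
    exact (dI k A).zero_mem

open Matrix Function

/-- Key inductive lemma: minors of `fromBlocks A 0 0 1` lie in determinantal
ideals of `A`. -/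
lemma key_aux {ι κ : Type*} (A : Matrix ι κ R) (q : ℕ) :
    ∀ (s : ℕ) (r : Fin s → ι ⊕ Fin q) (c : Fin s → κ ⊕ Fin q),
      Function.Injective r → Function.Injective c →
      ((Matrix.fromBlocks A 0 0 (1 : Matrix (Fin q) (Fin q) R)).submatrix r c).det ∈
        dI (s - (Finset.univ.filter fun i => (r i).isRight).card) A := by
  classical
  intro s
  induction s with
  | zero =>
    intro r c _ _
    simp [dI_zero]
  | succ s ih =>
    intro r c hr hc
    by_cases hex : ∃ i b, r i = Sum.inr b
    · obtain ⟨i₀, b, hb⟩ := hex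
      -- cardinality bookkeeping
      have hcard : (Finset.univ.filter fun i => (r i).isRight).card
          = 1 + (Finset.univ.filter fun j : Fin s => (r (i₀.succAbove j)).isRight).card := by
        rw [Finset.card_filter, Finset.card_filter]
        rw [Fin.sum_univ_succAbove _ i₀]
        simp [hb]
      by_cases hcb : ∃ j, c j = Sum.inr b
      · obtain ⟨j₀, hj₀⟩ := hcb
        set M := (Matrix.fromBlocks A 0 0 (1 : Matrix (Fin q) (Fin q) R)).submatrix r c with hMdef
        have hrow : ∀ j, M i₀ j = if j = j₀ then 1 else 0 := by
          intro j
          rcases hcj : c j with a | b'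
          · have : j ≠ j₀ := by rintro rfl; rw [hcj] at hj₀; exact Sum.inl_ne_inr hj₀
            simp [hMdef, Matrix.submatrix_apply, hb, hcj, Matrix.fromBlocks, this]
          · by_cases hjj : j = j₀
            · subst hjj
              rw [hcj] at hj₀
              obtain rfl : b' = b := Sum.inr.inj hj₀
              simp [hMdef, Matrix.submatrix_apply, hb, hcj, Matrix.fromBlocks, Matrix.one_apply]
            · have hbb : b' ≠ b := by
                rintro rfl
                exact hjj (hc (hcj.trans hj₀.symm))
              simp only [hMdef, Matrix.submatrix_apply, hb, hcj, Matrix.fromBlocks,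
                Matrix.of_apply, Sum.elim_inr, Matrix.one_apply, if_neg (Ne.symm hbb),
                if_neg hjj]
        have hdet : M.det = (-1 : R) ^ ((i₀ : ℕ) + (j₀ : ℕ)) *
            (M.submatrix i₀.succAbove j₀.succAbove).det := by
          rw [Matrix.det_succ_row M i₀]
          rw [Finset.sum_eq_single j₀]
          · rw [hrow j₀]; simp
          · intro j _ hj
            rw [hrow j]
            simp [hj]
          · intro h; exact absurd (Finset.mem_univ j₀) h
        have hsub : M.submatrix i₀.succAbove j₀.succAbove
            = (Matrix.fromBlocks A 0 0 (1 : Matrix (Fin q) (Fin q) R)).submatrix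
              (r ∘ i₀.succAbove) (c ∘ j₀.succAbove) := by
          rw [hMdef, Matrix.submatrix_submatrix]
        have hmem := ih (r ∘ i₀.succAbove) (c ∘ j₀.succAbove)
          (hr.comp (Fin.succAbove_right_injective))
          (hc.comp (Fin.succAbove_right_injective))
        rw [← hsub] at hmem
        have hidx : s - (Finset.univ.filter
              fun j : Fin s => ((r ∘ i₀.succAbove) j).isRight).card
            = s + 1 - (Finset.univ.filter fun i => (r i).isRight).card := by
          rw [hcard]
          have hle : (Finset.univ.filter
              fun j : Fin s => (r (i₀.succAbove j)).isRight).card ≤ s :=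
            le_trans (Finset.card_filter_le _ _) (by simp)
          simp only [Function.comp]
          omega
        rw [hidx] at hmem
        rw [hdet]
        exact Ideal.mul_mem_left _ _ hmem
      · -- row i₀ is zero
        have h0 : ((Matrix.fromBlocks A 0 0 (1 : Matrix (Fin q) (Fin q) R)).submatrix r c).det
            = 0 := by
          refine Matrix.det_eq_zero_of_row_eq_zero i₀ fun j => ?_
          rcases hcj : c j with a | b'
          · simp [Matrix.submatrix_apply, hb, hcj, Matrix.fromBlocks]
          · have hbb : b' ≠ b := fun h => hcb ⟨j, by rw [hcj, h]⟩
            simp only [Matrix.submatrix_apply, hb, hcj, Matrix.fromBlocks,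
              Matrix.of_apply, Sum.elim_inr, Matrix.one_apply, if_neg (Ne.symm hbb)]
        rw [h0]
        exact Submodule.zero_mem _
    · -- all rows are from ι
      push_neg at hex
      have hall : ∀ i, ∃ a, r i = Sum.inl a := by
        intro i
        rcases h : r i with a | b
        · exact ⟨a, rfl⟩
        · exact absurd h (hex i b)
      choose a ha using hall
      have hcard0 : (Finset.univ.filter fun i => (r i).isRight).card = 0 := by
        rw [Finset.card_eq_zero, Finset.filter_eq_empty_iff]
        intro i _
        rw [ha i]
        simp
      rw [hcard0, Nat.sub_zero]
      by_cases hc2 : ∃ j b, c j = Sum.inr b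
      · obtain ⟨j₀, b, hj₀⟩ := hc2
        have h0 : ((Matrix.fromBlocks A 0 0 (1 : Matrix (Fin q) (Fin q) R)).submatrix r c).det
            = 0 := by
          refine Matrix.det_eq_zero_of_column_eq_zero j₀ fun i => ?_
          simp [Matrix.submatrix_apply, ha i, hj₀, Matrix.fromBlocks]
        rw [h0]
        exact Submodule.zero_mem _
      · push_neg at hc2
        have hallc : ∀ j, ∃ g, c j = Sum.inl g := by
          intro j
          rcases h : c j with g | b
          · exact ⟨g, rfl⟩
          · exact absurd h (hc2 j b)
        choose g hg using hallc
        have ha_inj : Function.Injective a := by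
          intro i i' h
          apply hr
          rw [ha i, ha i', h]
        have hg_inj : Function.Injective g := by
          intro j j' h
          apply hc
          rw [hg j, hg j', h]
        have heq : (Matrix.fromBlocks A 0 0 (1 : Matrix (Fin q) (Fin q) R)).submatrix r c
            = A.submatrix a g := by
          ext i j
          simp [Matrix.submatrix_apply, ha i, hg j, Matrix.fromBlocks]
        rw [heq]
        exact mem_dI A ha_inj hg_inj

open Matrix Function

lemma sum_elim_injective {α β γ δ : Type*} {f : α → γ} {g : β → δ}
    (hf : Function.Injective f) (hg : Function.Injective g) :
    Function.Injective (Sum.elim (Sum.inl ∘ f) (Sum.inr ∘ g) : α ⊕ β → γ ⊕ δ) := by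
  rintro (a | b) (a' | b') h <;> simp_all
  exacts [hf h, hg h]

lemma filter_isRight_card_le {ι : Type*} {q s : ℕ} {r : Fin s → ι ⊕ Fin q}
    (hr : Function.Injective r) :
    (Finset.univ.filter fun i => (r i).isRight).card ≤ q := by
  classical
  rcases Finset.eq_empty_or_nonempty (Finset.univ.filter fun i => (r i).isRight) with h | h
  · simp [h]
  · obtain ⟨i₁, hi₁⟩ := h
    have hb₁ : (r i₁).isRight := (Finset.mem_filter.mp hi₁).2
    obtain ⟨b₁, hb⟩ := Sum.isRight_iff.mp hb₁
    have : (Finset.univ.filter fun i => (r i).isRight).card ≤ (Finset.univ : Finset (Fin q)).card := by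
      refine Finset.card_le_card_of_injOn
        (fun i => ((r i).getRight?).getD b₁) (fun _ _ => Finset.mem_univ _) ?_
      intro i hi i' hi' hii
      obtain ⟨b, hbi⟩ := Sum.isRight_iff.mp (Finset.mem_filter.mp hi).2
      obtain ⟨b', hbi'⟩ := Sum.isRight_iff.mp (Finset.mem_filter.mp hi').2
      simp only [hbi, hbi', Sum.getRight?, Option.getD_some] at hii
      apply hr
      rw [hbi, hbi', hii]
    simpa using this

lemma dI_diag_one_le {ι κ : Type*} (A : Matrix ι κ R) (q t : ℕ) :
    dI (t + q) (Matrix.fromBlocks A 0 0 (1 : Matrix (Fin q) (Fin q) R)) ≤ dI t A := by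
  classical
  rw [dI, Ideal.span_le]
  rintro d ⟨r, c, hr, hc, rfl⟩
  have hmem := key_aux A q (t + q) r c hr hc
  refine dI_anti A ?_ hmem
  have := filter_isRight_card_le hr
  omega

lemma dI_le_diag_one {ι κ : Type*} (A : Matrix ι κ R) (q t : ℕ) :
    dI t A ≤ dI (t + q) (Matrix.fromBlocks A 0 0 (1 : Matrix (Fin q) (Fin q) R)) := by
  classical
  rw [dI, Ideal.span_le]
  rintro d ⟨r, c, hr, hc, rfl⟩
  set Y := (Matrix.fromBlocks A 0 0 (1 : Matrix (Fin q) (Fin q) R)).submatrix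
    (Sum.elim (Sum.inl ∘ r) (Sum.inr ∘ id)) (Sum.elim (Sum.inl ∘ c) (Sum.inr ∘ id))
    with hY
  have hYeq : Y = Matrix.fromBlocks (A.submatrix r c) 0 0 (1 : Matrix (Fin q) (Fin q) R) := by
    ext (i | i) (j | j) <;> simp [hY, Matrix.fromBlocks]
  have hdet : (A.submatrix r c).det =
      ((Matrix.fromBlocks A 0 0 (1 : Matrix (Fin q) (Fin q) R)).submatrix
        (Sum.elim (Sum.inl ∘ r) (Sum.inr ∘ id) ∘ (finSumFinEquiv (m := t) (n := q)).symm)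
        (Sum.elim (Sum.inl ∘ c) (Sum.inr ∘ id) ∘ (finSumFinEquiv (m := t) (n := q)).symm)).det := by
    have h1 : (Matrix.fromBlocks A 0 0 (1 : Matrix (Fin q) (Fin q) R)).submatrix
        (Sum.elim (Sum.inl ∘ r) (Sum.inr ∘ id) ∘ (finSumFinEquiv (m := t) (n := q)).symm)
        (Sum.elim (Sum.inl ∘ c) (Sum.inr ∘ id) ∘ (finSumFinEquiv (m := t) (n := q)).symm)
        = Y.submatrix (finSumFinEquiv (m := t) (n := q)).symm
          (finSumFinEquiv (m := t) (n := q)).symm := by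
      rw [hY, Matrix.submatrix_submatrix]
    rw [h1, Matrix.det_submatrix_equiv_self, hYeq, Matrix.det_fromBlocks_zero₂₁]
    simp
  rw [hdet]
  exact mem_dI _
    ((sum_elim_injective hr injective_id).comp (finSumFinEquiv.symm.injective))
    ((sum_elim_injective hc injective_id).comp (finSumFinEquiv.symm.injective))

lemma dI_mul_right_le {ι κ κ' : Type*} [Fintype κ] (A : Matrix ι κ R) (U : Matrix κ κ' R)
    (k : ℕ) : dI k (A * U) ≤ dI k A := by
  classical
  refine dI_le_of_cols A (A * U) (fun j => ⟨fun b => U b j, ?_⟩) k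
  ext i
  simp [Matrix.mul_apply, Matrix.mulVec, dotProduct]

lemma dI_mul_left_le {ι ι' κ : Type*} [Fintype ι] (E : Matrix ι' ι R) (A : Matrix ι κ R)
    (k : ℕ) : dI k (E * A) ≤ dI k A := by
  rw [← dI_transpose k (E * A), ← dI_transpose k A, Matrix.transpose_mul]
  exact dI_mul_right_le Aᵀ Eᵀ k

/-- Determinantal ideals of `[[A, V], [0, -1]]`. -/
lemma dI_block {ι κ : Type*} [Fintype ι] [DecidableEq ι] (A : Matrix ι κ R)
    {q : ℕ} (V : Matrix ι (Fin q) R) (t : ℕ) :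
    dI (t + q) (Matrix.fromBlocks A V 0 (-1 : Matrix (Fin q) (Fin q) R)) = dI t A := by
  classical
  set E : Matrix (ι ⊕ Fin q) (ι ⊕ Fin q) R :=
    Matrix.fromBlocks 1 V 0 (-1) with hE
  set D : Matrix (ι ⊕ Fin q) (κ ⊕ Fin q) R :=
    Matrix.fromBlocks A 0 0 1 with hD
  have hED : E * D = Matrix.fromBlocks A V 0 (-1) := by
    rw [hE, hD, Matrix.fromBlocks_multiply]
    simp
  have hEE : E * (E * D) = D := by
    rw [← Matrix.mul_assoc, hE, Matrix.fromBlocks_multiply]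
    simp [Matrix.fromBlocks_one]
  refine le_antisymm ?_ ?_
  · rw [← hED]
    exact le_trans (dI_mul_left_le E D (t + q)) (dI_diag_one_le A q t)
  · refine le_trans (dI_le_diag_one A q t) ?_
    show dI (t + q) D ≤ _
    rw [← hEE, hED]
    exact dI_mul_left_le E _ (t + q)

lemma dI_top_of_le {ι κ : Type*} (A : Matrix ι κ R) {q : ℕ} (V : Matrix ι (Fin q) R)
    {s : ℕ} (hs : s ≤ q) :
    dI s (Matrix.fromBlocks A V 0 (-1 : Matrix (Fin q) (Fin q) R)) = ⊤ := by
  classical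
  have hsub : (Matrix.fromBlocks A V 0 (-1 : Matrix (Fin q) (Fin q) R)).submatrix
      (Sum.inr ∘ Fin.castLE hs) (Sum.inr ∘ Fin.castLE hs)
      = (-1 : Matrix (Fin s) (Fin s) R) := by
    ext i j
    simp only [Matrix.submatrix_apply, Function.comp_apply, Matrix.fromBlocks,
      Matrix.of_apply, Sum.elim_inr, Matrix.neg_apply, Matrix.one_apply, Fin.castLE_inj]
  have hmem := mem_dI (Matrix.fromBlocks A V 0 (-1 : Matrix (Fin q) (Fin q) R))
    (Sum.inr_injective.comp (Fin.castLE_injective hs))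
    (Sum.inr_injective.comp (Fin.castLE_injective hs))
  rw [hsub] at hmem
  have hu : IsUnit ((-1 : Matrix (Fin s) (Fin s) R).det) := by
    rw [show (-1 : Matrix (Fin s) (Fin s) R) = -(1 : Matrix (Fin s) (Fin s) R) from rfl,
      Matrix.det_neg, Matrix.det_one]
    simp only [mul_one]
    exact (IsUnit.neg isUnit_one).pow _
  exact Ideal.eq_top_of_isUnit_mem _ hmem hu

lemma dI_block_all {κ : Type*} {m : ℕ} (A : Matrix (Fin m) κ R) {q : ℕ}
    (V : Matrix (Fin m) (Fin q) R) (k : ℕ) :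
    dI (m + q - k) (Matrix.fromBlocks A V 0 (-1 : Matrix (Fin q) (Fin q) R)) = dI (m - k) A := by
  rcases le_or_gt k m with h | h
  · have : m + q - k = (m - k) + q := by omega
    rw [this]
    exact dI_block A V (m - k)
  · have h1 : m - k = 0 := by omega
    have h2 : m + q - k ≤ q := by omega
    rw [h1, dI_zero, dI_top_of_le A V h2]

open Matrix Function

lemma dI_eq_of_range_eq {ι κ κ' : Type*} [Fintype κ] [Fintype κ'] [DecidableEq κ]
    [DecidableEq κ'] (A : Matrix ι κ R) (B : Matrix ι κ' R)
    (h : LinearMap.range A.mulVecLin = LinearMap.range B.mulVecLin) (k : ℕ) :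
    dI k A = dI k B := by
  refine le_antisymm ?_ ?_
  · refine dI_le_of_cols B A (fun j => ?_) k
    have : (fun i => A i j) ∈ LinearMap.range B.mulVecLin := by
      rw [← h]
      exact ⟨Pi.single j 1, by ext i; simp [Matrix.mulVecLin_apply, Matrix.mulVec_single]⟩
    obtain ⟨u, hu⟩ := this
    exact ⟨u, by rw [← hu]; rfl⟩
  · refine dI_le_of_cols A B (fun j => ?_) k
    have : (fun i => B i j) ∈ LinearMap.range A.mulVecLin := by
      rw [h]
      exact ⟨Pi.single j 1, by ext i; simp [Matrix.mulVecLin_apply, Matrix.mulVec_single]⟩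
    obtain ⟨u, hu⟩ := this
    exact ⟨u, by rw [← hu]; rfl⟩

lemma pi_mulVec {α β : Type*} [Fintype β] (π : (α → R) →ₗ[R] M) (V : Matrix α β R)
    (y : β → R) : π (V.mulVec y) = ∑ j, y j • π (fun i => V i j) := by
  have h : V.mulVec y = ∑ j, y j • (fun i => V i j) := by
    ext i
    simp only [Matrix.mulVec, dotProduct, Finset.sum_apply, Pi.smul_apply, smul_eq_mul]
    exact Finset.sum_congr rfl fun j _ => mul_comm _ _
  rw [h, map_sum]
  simp only [_root_.map_smul]

lemma pi_single_sum {α : Type*} [Fintype α] [DecidableEq α] (π : (α → R) →ₗ[R] M)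
    (y : α → R) : π y = ∑ j, y j • π (Pi.single j 1) := by
  conv_lhs => rw [← Finset.univ_sum_single y, map_sum]
  refine Finset.sum_congr rfl fun j _ => ?_
  rw [← _root_.map_smul]
  congr 1
  ext i
  rcases eq_or_ne i j with rfl | hij
  · simp
  · simp [Pi.single_eq_of_ne hij]

/-- The combined surjection `R^{m} ⊕ R^{m'} → M`. -/
def stackMap {m m' : ℕ} (π : (Fin m → R) →ₗ[R] M) (π' : (Fin m' → R) →ₗ[R] M) :
    ((Fin m ⊕ Fin m') → R) →ₗ[R] M :=
  π ∘ₗ LinearMap.funLeft R R Sum.inl + π' ∘ₗ LinearMap.funLeft R R Sum.inr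

lemma stackMap_apply {m m' : ℕ} (π : (Fin m → R) →ₗ[R] M) (π' : (Fin m' → R) →ₗ[R] M)
    (x : (Fin m ⊕ Fin m') → R) :
    stackMap π π' x = π (x ∘ Sum.inl) + π' (x ∘ Sum.inr) := rfl

lemma range_stack {m m' n : ℕ} (π : (Fin m → R) →ₗ[R] M) (π' : (Fin m' → R) →ₗ[R] M)
    (A : Matrix (Fin m) (Fin n) R)
    (hk : LinearMap.ker π = LinearMap.range A.mulVecLin)
    (V : Matrix (Fin m) (Fin m') R) (hV : ∀ j, π (fun i => V i j) = π' (Pi.single j 1)) :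
    LinearMap.range (Matrix.fromBlocks A V 0 (-1 : Matrix (Fin m') (Fin m') R)).mulVecLin
      = LinearMap.ker (stackMap π π') := by
  have hπV : ∀ y : Fin m' → R, π (V.mulVec y) = π' y := by
    intro y
    rw [pi_mulVec]
    simp_rw [hV]
    rw [← pi_single_sum]
  ext x
  simp only [LinearMap.mem_range, LinearMap.mem_ker, Matrix.mulVecLin_apply]
  constructor
  · rintro ⟨v, rfl⟩
    rw [Matrix.fromBlocks_mulVec, stackMap_apply]
    simp only [Sum.elim_comp_inl, Sum.elim_comp_inr, Matrix.zero_mulVec, Matrix.neg_mulVec,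
      Matrix.one_mulVec, zero_add, map_add, map_neg]
    have h1 : π (A.mulVec (v ∘ Sum.inl)) = 0 := by
      have : A.mulVec (v ∘ Sum.inl) ∈ LinearMap.range A.mulVecLin :=
        ⟨v ∘ Sum.inl, rfl⟩
      rw [← hk] at this
      exact this
    rw [h1, zero_add, hπV]
    abel
  · intro hx
    have hπw : π (x ∘ Sum.inl + V.mulVec (x ∘ Sum.inr)) = 0 := by
      rw [map_add, hπV]
      rw [stackMap_apply] at hx
      exact hx
    have : x ∘ Sum.inl + V.mulVec (x ∘ Sum.inr) ∈ LinearMap.range A.mulVecLin := by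
      rw [← hk]
      exact hπw
    obtain ⟨u, hu⟩ := this
    refine ⟨Sum.elim u (-(x ∘ Sum.inr)), ?_⟩
    rw [Matrix.fromBlocks_mulVec]
    simp only [Sum.elim_comp_inl, Sum.elim_comp_inr, Matrix.zero_mulVec, Matrix.neg_mulVec,
      Matrix.one_mulVec, zero_add, Matrix.mulVec_neg, neg_neg]
    rw [show A.mulVec u = x ∘ Sum.inl + V.mulVec (x ∘ Sum.inr) from hu]
    funext i
    cases i with
    | inl i => simp
    | inr i => simp

theorem fit {m n m' n' : ℕ} {π : (Fin m → R) →ₗ[R] M} {π' : (Fin m' → R) →ₗ[R] M}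
    {A : Matrix (Fin m) (Fin n) R} {B : Matrix (Fin m') (Fin n') R}
    (hπs : Function.Surjective π) (hπk : LinearMap.ker π = LinearMap.range A.mulVecLin)
    (hπ's : Function.Surjective π') (hπ'k : LinearMap.ker π' = LinearMap.range B.mulVecLin)
    (k : ℕ) : dI (m - k) A = dI (m' - k) B := by
  classical
  choose v hv using fun j : Fin m' => hπs (π' (Pi.single j 1))
  set V : Matrix (Fin m) (Fin m') R := Matrix.of fun i j => v j i with hVdef
  choose w hw using fun i : Fin m => hπ's (π (Pi.single i 1))
  set W : Matrix (Fin m') (Fin m) R := Matrix.of fun j i => w i j with hWdef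
  set C := Matrix.fromBlocks A V 0 (-1 : Matrix (Fin m') (Fin m') R) with hCdef
  set Y := Matrix.fromBlocks B W 0 (-1 : Matrix (Fin m) (Fin m) R) with hYdef
  have hC : LinearMap.range C.mulVecLin = LinearMap.ker (stackMap π π') :=
    range_stack π π' A hπk V (fun j => hv j)
  have hY : LinearMap.range Y.mulVecLin = LinearMap.ker (stackMap π' π) :=
    range_stack π' π B hπ'k W (fun i => hw i)
  set X := Y.submatrix ⇑(Equiv.sumComm (Fin m) (Fin m')) ⇑(Equiv.refl (Fin n' ⊕ Fin m))
    with hXdef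
  have hXmul : ∀ u : (Fin n' ⊕ Fin m) → R, X.mulVec u = Y.mulVec u ∘ Sum.swap := by
    intro u
    funext i
    rfl
  have hX : LinearMap.range X.mulVecLin = LinearMap.ker (stackMap π π') := by
    ext x
    simp only [LinearMap.mem_range, LinearMap.mem_ker, Matrix.mulVecLin_apply]
    have hsw : ∀ z : (Fin m ⊕ Fin m') → R,
        stackMap π π' z = stackMap π' π (z ∘ Sum.swap) := by
      intro z
      rw [stackMap_apply, stackMap_apply]
      rw [add_comm]
      rfl
    constructor
    · rintro ⟨u, rfl⟩
      rw [hsw, hXmul]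
      have : Y.mulVec u ∈ LinearMap.range Y.mulVecLin := ⟨u, rfl⟩
      rw [hY] at this
      have h2 : (Y.mulVec u ∘ Sum.swap) ∘ Sum.swap = Y.mulVec u := by
        funext i
        simp [Function.comp, Sum.swap_swap]
      rw [h2]
      exact this
    · intro hx
      have : x ∘ Sum.swap ∈ LinearMap.ker (stackMap π' π) := by
        rw [LinearMap.mem_ker, ← hsw]
        exact hx
      rw [← hY] at this
      obtain ⟨u, hu⟩ := this
      refine ⟨u, ?_⟩
      rw [hXmul, Matrix.mulVecLin_apply] at *
      rw [hu]
      funext i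
      simp [Function.comp, Sum.swap_swap]
  calc dI (m - k) A = dI (m + m' - k) C := (dI_block_all A V k).symm
    _ = dI (m + m' - k) X := dI_eq_of_range_eq C X (by rw [hC, hX]) _
    _ = dI (m + m' - k) Y := dI_reindex _ Y (Equiv.sumComm (Fin m) (Fin m')) (Equiv.refl _)
    _ = dI (m' + m - k) Y := by rw [Nat.add_comm m m']
    _ = dI (m' - k) B := dI_block_all B W k

open Matrix Function

/-- Base change of a finite free presentation. -/
lemma baseChange_pres {R S M : Type} [CommRing R] [CommRing S] [Algebra R S]
    [AddCommGroup M] [Module R M] {m n : ℕ} (A : Matrix (Fin m) (Fin n) R)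
    (π : (Fin m → R) →ₗ[R] M) (hπs : Function.Surjective π)
    (hπk : LinearMap.ker π = LinearMap.range A.mulVecLin) :
    ∃ πS : (Fin m → S) →ₗ[S] (S ⊗[R] M), Function.Surjective πS ∧
      LinearMap.ker πS = LinearMap.range (A.map (algebraMap R S)).mulVecLin := by
  classical
  set em := TensorProduct.piScalarRight R S S (Fin m)
  set en := TensorProduct.piScalarRight R S S (Fin n)
  set πS : (Fin m → S) →ₗ[S] (S ⊗[R] M) :=
    (π.baseChange S) ∘ₗ (em.symm : (Fin m → S) →ₗ[S] S ⊗[R] (Fin m → R)) with hπS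
  -- surjectivity
  have hbc_surj : Function.Surjective (π.baseChange S) := by
    have h1 : Function.Surjective (LinearMap.lTensor S π) :=
      LinearMap.lTensor_surjective S hπs
    intro y
    obtain ⟨x, hx⟩ := h1 y
    exact ⟨x, by rw [LinearMap.baseChange_eq_ltensor]; exact hx⟩
  have hsurj : Function.Surjective πS := hbc_surj.comp em.symm.surjective
  -- the commuting square
  have hsq : (A.map (algebraMap R S)).mulVecLin
      = (em : S ⊗[R] (Fin m → R) →ₗ[S] (Fin m → S)) ∘ₗ (A.mulVecLin.baseChange S) ∘ₗ
        (en.symm : (Fin n → S) →ₗ[S] S ⊗[R] (Fin n → R)) := by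
    refine Module.Basis.ext (Pi.basisFun S (Fin n)) fun j => ?_
    have hb : ((Pi.basisFun S (Fin n)) j : Fin n → S) = Pi.single j 1 := by
      ext i
      simp [Pi.basisFun_apply]
    rw [hb]
    have h1 : en.symm (Pi.single j (1 : S)) = (1 : S) ⊗ₜ[R] Pi.single j (1 : R) :=
      TensorProduct.piScalarRight_symm_single R S S (Fin n) (1 : S) j
    simp only [LinearMap.comp_apply, LinearEquiv.coe_coe]
    rw [h1]
    rw [LinearMap.baseChange_tmul]
    have h2 : A.mulVecLin (Pi.single j 1) = fun i => A i j := by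
      ext i
      simp [Matrix.mulVecLin_apply, Matrix.mulVec_single]
    rw [h2]
    have h3 : em ((1 : S) ⊗ₜ fun i => A i j) = fun i => algebraMap R S (A i j) := by
      rw [show em ((1:S) ⊗ₜ fun i => A i j)
          = TensorProduct.piScalarRightHom R S S (Fin m) ((1:S) ⊗ₜ fun i => A i j) from rfl]
      rw [TensorProduct.piScalarRightHom_tmul]
      funext i
      rw [Algebra.smul_def, mul_one]
    rw [h3]
    ext i
    simp [Matrix.mulVecLin_apply, Matrix.mulVec_single, Matrix.map_apply]
  -- kernel
  have hexact : Function.Exact (A.mulVecLin.baseChange S) (π.baseChange S) := by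
    have hex : Function.Exact A.mulVecLin π := LinearMap.exact_iff.mpr hπk
    have := lTensor_exact S hex hπs
    rw [show (A.mulVecLin.baseChange S : S ⊗[R] (Fin n → R) → S ⊗[R] (Fin m → R))
        = LinearMap.lTensor S A.mulVecLin from LinearMap.baseChange_eq_ltensor _,
      show (π.baseChange S : S ⊗[R] (Fin m → R) → S ⊗[R] M)
        = LinearMap.lTensor S π from LinearMap.baseChange_eq_ltensor _]
    exact this
  have hker_bc : LinearMap.ker (π.baseChange S) = LinearMap.range (A.mulVecLin.baseChange S) :=
    (LinearMap.exact_iff.mp hexact)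
  refine ⟨πS, hsurj, ?_⟩
  rw [hπS, LinearMap.ker_comp, hker_bc, hsq, LinearMap.range_comp,
    LinearMap.range_comp_of_range_eq_top _
      (LinearMap.range_eq_top.mpr en.symm.surjective)]
  exact (Submodule.map_equiv_eq_comap_symm em _).symm

lemma dI_map {S : Type*} [CommRing S] {m n : ℕ} (k : ℕ) (A : Matrix (Fin m) (Fin n) R)
    (φ : R →+* S) : dI k (A.map φ) = Ideal.map φ (dI k A) := by
  rw [dI, dI, Ideal.map_span]
  congr 1
  ext d
  constructor
  · rintro ⟨r, c, hr, hc, rfl⟩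
    refine ⟨(A.submatrix r c).det, ⟨r, c, hr, hc, rfl⟩, ?_⟩
    rw [RingHom.map_det, RingHom.mapMatrix_apply, ← Matrix.submatrix_map]
  · rintro ⟨x, ⟨r, c, hr, hc, rfl⟩, rfl⟩
    refine ⟨r, c, hr, hc, ?_⟩
    rw [RingHom.map_det, RingHom.mapMatrix_apply, ← Matrix.submatrix_map]

lemma detIdeal_eq_dI {m n : ℕ} (k : ℕ) (A : Matrix (Fin m) (Fin n) R) :
    detIdeal k A = dI k A := rfl

lemma fittingIdeal_eq {M : Type*} [AddCommGroup M] [Module R M] {m n : ℕ}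
    {A : Matrix (Fin m) (Fin n) R} (hA : IsPresentation (M := M) A) (k : ℕ) :
    fittingIdeal R M k = detIdeal (m - k) A := by
  refine le_antisymm ?_ (le_sSup ⟨m, n, A, hA, rfl⟩)
  refine sSup_le ?_
  rintro I ⟨m', n', B, ⟨π', hs', hk'⟩, rfl⟩
  obtain ⟨π, hs, hk⟩ := hA
  rw [detIdeal_eq_dI, detIdeal_eq_dI]
  exact le_of_eq (fit hs' hk' hs hk k)

end Fit

/-- base change of Fitting ideals.  Let `R` be a commutative ring, `M` an
`R`-module with a finite free presentation, and `φ : R → S` a ring morphism (encoded as the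
structure morphism `algebraMap R S` of an `R`-algebra).  Then for every `k ≥ 0`, the `k`-th
Fitting ideal of `S ⊗_R M` over `S` is the ideal of `S` generated by the image under `φ` of
the `k`-th Fitting ideal of `M` over `R`. -/
theorem statement11 {R S M : Type} [CommRing R] [CommRing S] [Algebra R S]
    [AddCommGroup M] [Module R M]
    (hM : ∃ (m n : ℕ) (A : Matrix (Fin m) (Fin n) R), IsPresentation (M := M) A)
    (k : ℕ) :
    fittingIdeal S (S ⊗[R] M) k = Ideal.map (algebraMap R S) (fittingIdeal R M k) := by
  obtain ⟨m, n, A, hA⟩ := hM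
  obtain ⟨π, hs, hk⟩ := hA
  have hAS : IsPresentation (M := S ⊗[R] M) (A.map (algebraMap R S)) := by
    obtain ⟨πS, h1, h2⟩ := Fit.baseChange_pres (S := S) A π hs hk
    exact ⟨πS, h1, h2⟩
  rw [Fit.fittingIdeal_eq (M := M) ⟨π, hs, hk⟩ k,
    Fit.fittingIdeal_eq (M := S ⊗[R] M) hAS k,
    Fit.detIdeal_eq_dI, Fit.detIdeal_eq_dI]
  exact Fit.dI_map (m - k) A (algebraMap R S)
end

section
/- Let R be a principal ideal domain and M ≅ R/(d₁) × … × R/(dₙ) a finitely generated torsion R-module with d₁ ∣ d₂ ∣ … ∣ dₙ. Then for 0 ≤ k ≤ n, the kth Fitting ideal of M over R is the principal ideal generated by d₁·…·d_{n−k} (with the convention that the empty product is 1, so Fitⁿ_R(M) = R). -/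
section FittingAux
set_option linter.unusedSectionVars false

open Matrix Function

variable {R : Type} [CommRing R]

/-- determinantal ideal with arbitrary index types -/
def myDetIdeal {α β : Type} (k : ℕ) (A : Matrix α β R) : Ideal R :=
  Ideal.span {d | ∃ (r : Fin k → α) (c : Fin k → β),
    Function.Injective r ∧ Function.Injective c ∧ d = (A.submatrix r c).det}

lemma minor_mem_myDetIdeal {α β : Type} {k : ℕ} (A : Matrix α β R)
    {r : Fin k → α} {c : Fin k → β} (hr : Injective r) (hc : Injective c) :
    (A.submatrix r c).det ∈ myDetIdeal k A :=
  Ideal.subset_span ⟨r, c, hr, hc, rfl⟩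

lemma myDetIdeal_le {α β : Type} {k : ℕ} (A : Matrix α β R) {I : Ideal R}
    (h : ∀ (r : Fin k → α) (c : Fin k → β), Injective r → Injective c →
      (A.submatrix r c).det ∈ I) : myDetIdeal k A ≤ I := by
  rw [myDetIdeal, Ideal.span_le]
  rintro x ⟨r, c, hr, hc, rfl⟩
  exact h r c hr hc

lemma myDetIdeal_submatrix_le {α β α' β' : Type} {k : ℕ} (A : Matrix α β R)
    (e : α' → α) (f : β' → β) (he : Injective e) (hf : Injective f) :
    myDetIdeal k (A.submatrix e f) ≤ myDetIdeal k A := by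
  refine myDetIdeal_le _ fun r c hr hc => ?_
  rw [Matrix.submatrix_submatrix]
  exact minor_mem_myDetIdeal A (he.comp hr) (hf.comp hc)

lemma myDetIdeal_submatrix_equiv {α β α' β' : Type} (k : ℕ) (A : Matrix α β R)
    (e : α' ≃ α) (f : β' ≃ β) :
    myDetIdeal k (A.submatrix e f) = myDetIdeal k A := by
  refine le_antisymm (myDetIdeal_submatrix_le A e f e.injective f.injective) ?_
  have : A = (A.submatrix (e : α' → α) f).submatrix e.symm f.symm := by
    ext i j; simp
  conv_lhs => rw [this]
  exact myDetIdeal_submatrix_le _ _ _ e.symm.injective f.symm.injective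

/-- zero-th determinantal ideal is everything -/
lemma myDetIdeal_zero {α β : Type} (A : Matrix α β R) : myDetIdeal 0 A = ⊤ := by
  rw [Ideal.eq_top_iff_one]
  have h := minor_mem_myDetIdeal (k := 0) A
    (r := Fin.elim0) (c := Fin.elim0) (fun i => i.elim0) (fun i => i.elim0)
  simpa [Matrix.det_fin_zero] using h

/-- antitone -/
lemma myDetIdeal_succ_le {α β : Type} (k : ℕ) (A : Matrix α β R) :
    myDetIdeal (k + 1) A ≤ myDetIdeal k A := by
  refine myDetIdeal_le _ fun r c hr hc => ?_
  rw [Matrix.det_succ_row_zero]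
  refine Ideal.sum_mem _ fun j _ => ?_
  refine Ideal.mul_mem_left _ _ ?_
  rw [Matrix.submatrix_submatrix]
  exact minor_mem_myDetIdeal A (hr.comp (Fin.succ_injective _))
    (hc.comp (Fin.succAbove_right_injective))

lemma myDetIdeal_mul_le {α β γ : Type} [Fintype β] (k : ℕ) (A : Matrix α β R)
    (C : Matrix β γ R) : myDetIdeal k (A * C) ≤ myDetIdeal k A := by
  classical
  refine myDetIdeal_le _ fun r c hr hc => ?_
  rw [← Matrix.det_transpose]
  have hrow : (((A * C).submatrix r c)ᵀ : Matrix (Fin k) (Fin k) R)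
      = fun j => ∑ b : β, C b (c j) • (fun i => A (r i) b) := by
    ext j i
    simp [Matrix.mul_apply, Matrix.transpose_apply, mul_comm]
  have h1 : (((A * C).submatrix r c)ᵀ).det = (Matrix.detRowAlternating :
      (Fin k → R) [⋀^Fin k]→ₗ[R] R).toMultilinearMap
      (fun j => ∑ b : β, C b (c j) • (fun i => A (r i) b)) := by
    rw [← hrow]; rfl
  rw [h1, (Matrix.detRowAlternating :
    (Fin k → R) [⋀^Fin k]→ₗ[R] R).toMultilinearMap.map_sum]
  refine Ideal.sum_mem _ fun p _ => ?_
  rw [(Matrix.detRowAlternating :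
    (Fin k → R) [⋀^Fin k]→ₗ[R] R).toMultilinearMap.map_smul_univ]
  by_cases hp : Injective p
  · refine Submodule.smul_mem _ _ ?_
    have : ((Matrix.detRowAlternating :
        (Fin k → R) [⋀^Fin k]→ₗ[R] R).toMultilinearMap (fun j i => A (r i) (p j)))
        = ((A.submatrix r p)ᵀ).det := rfl
    rw [this, Matrix.det_transpose]
    exact minor_mem_myDetIdeal A hr hp
  · rw [Injective] at hp
    push_neg at hp
    obtain ⟨i, j, hij, hne⟩ := hp
    have hz : ((Matrix.detRowAlternating :
        (Fin k → R) [⋀^Fin k]→ₗ[R] R).toMultilinearMap (fun j i => A (r i) (p j))) = 0 :=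
      AlternatingMap.map_eq_zero_of_eq _ _ (by rw [hij]) hne
    rw [hz]
    exact Submodule.smul_mem _ _ (zero_mem _)

lemma myDetIdeal_le_of_range_le {α β γ : Type} [Fintype β] [Fintype γ] [DecidableEq γ]
    (k : ℕ) (A : Matrix α β R) (A' : Matrix α γ R)
    (h : LinearMap.range A'.mulVecLin ≤ LinearMap.range A.mulVecLin) :
    myDetIdeal k A' ≤ myDetIdeal k A := by
  have hcol : ∀ j : γ, ∃ y : β → R, A.mulVec y = fun i => A' i j := by
    intro j
    have : (fun i => A' i j) ∈ LinearMap.range A'.mulVecLin := by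
      refine ⟨Pi.single j 1, ?_⟩
      simp [Matrix.mulVecLin_apply, Matrix.mulVec_single]
      rfl
    exact h this
  choose y hy using hcol
  have hAC : A' = A * (Matrix.of fun b j => y j b) := by
    ext i j
    have := congrFun (hy j) i
    rw [Matrix.mulVec] at this
    simp only [Matrix.mul_apply, Matrix.of_apply]
    rw [← this]
    simp [dotProduct]
  rw [hAC]
  exact myDetIdeal_mul_le k A _

lemma myDetIdeal_eq_of_range_eq {α β γ : Type} [Fintype β] [Fintype γ]
    [DecidableEq β] [DecidableEq γ]
    (k : ℕ) (A : Matrix α β R) (A' : Matrix α γ R)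
    (h : LinearMap.range A.mulVecLin = LinearMap.range A'.mulVecLin) :
    myDetIdeal k A = myDetIdeal k A' :=
  le_antisymm (myDetIdeal_le_of_range_le k A' A h.le)
    (myDetIdeal_le_of_range_le k A A' h.ge)

lemma sum_fin1_eq_inl {α ι : Type} {r : ι → α ⊕ Fin 1} (h : ∀ i, r i ≠ Sum.inr 0) :
    ∃ r₁ : ι → α, r = Sum.inl ∘ r₁ ∧ (Injective r → Injective r₁) := by
  have : ∀ i, ∃ a, r i = Sum.inl a := by
    intro i
    rcases hri : r i with a | x
    · exact ⟨a, rfl⟩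
    · exact absurd (by rw [hri, Fin.eq_zero x]) (h i)
  choose r₁ h₁ using this
  refine ⟨r₁, funext h₁, fun hr i j hij => hr ?_⟩
  rw [h₁ i, h₁ j, hij]

lemma myDetIdeal_oneStep {α β : Type} (j : ℕ) (A : Matrix α β R) (w : Matrix α (Fin 1) R) :
    myDetIdeal j (Matrix.fromBlocks A w 0 (1 : Matrix (Fin 1) (Fin 1) R))
      = myDetIdeal (j - 1) A := by
  classical
  set B := Matrix.fromBlocks A w 0 (1 : Matrix (Fin 1) (Fin 1) R) with hB
  rcases j with _ | t
  · rw [myDetIdeal_zero, myDetIdeal_zero]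
  refine le_antisymm ?_ ?_
  · -- hard direction
    refine myDetIdeal_le _ fun r c hr hc => ?_
    set M := B.submatrix r c with hM
    simp only [Nat.add_sub_cancel]
    by_cases h1 : ∃ i0, r i0 = Sum.inr 0
    · obtain ⟨i0, hi0⟩ := h1
      by_cases h2 : ∃ j0, c j0 = Sum.inr 0
      · obtain ⟨j0, hj0⟩ := h2
        rw [Matrix.det_succ_row M i0]
        refine Ideal.sum_mem _ fun j' _ => ?_
        by_cases hj' : j' = j0
        · subst hj'
          refine Ideal.mul_mem_left _ _ ?_
          have hrne : ∀ i, r (i0.succAbove i) ≠ Sum.inr 0 := by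
            intro i hcon
            exact Fin.succAbove_ne i0 i (hr (hcon.trans hi0.symm))
          have hcne : ∀ i, c (j'.succAbove i) ≠ Sum.inr 0 := by
            intro i hcon
            exact Fin.succAbove_ne j' i (hc (hcon.trans hj0.symm))
          obtain ⟨r₁, hr₁, hr₁inj⟩ := sum_fin1_eq_inl hrne
          obtain ⟨c₁, hc₁, hc₁inj⟩ := sum_fin1_eq_inl hcne
          have : M.submatrix i0.succAbove j'.succAbove = A.submatrix r₁ c₁ := by
            ext a b
            show B (r (i0.succAbove a)) (c (j'.succAbove b)) = A (r₁ a) (c₁ b)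
            rw [congrFun hr₁ a, congrFun hc₁ b]
            rfl
          rw [this]
          exact minor_mem_myDetIdeal A (hr₁inj (hr.comp (Fin.succAbove_right_injective)))
            (hc₁inj (hc.comp (Fin.succAbove_right_injective)))
        · have : M i0 j' = 0 := by
            have : c j' ≠ Sum.inr 0 := fun hcon => hj' (hc (hcon.trans hj0.symm))
            rcases hcj : c j' with b | x
            · simp [hM, hB, hi0, hcj, Matrix.fromBlocks]
            · exact absurd (by rw [hcj, Fin.eq_zero x]) this
          rw [this]
          simp
      · push_neg at h2
        have : M.det = 0 := by
          refine Matrix.det_eq_zero_of_row_eq_zero i0 fun j' => ?_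
          have : c j' ≠ Sum.inr 0 := by
            intro hcon; exact h2 j' (by rw [hcon])
          rcases hcj : c j' with b | x
          · simp [hM, hB, hi0, hcj, Matrix.fromBlocks]
          · exact absurd (by rw [hcj, Fin.eq_zero x]) this
        rw [this]; exact zero_mem _
    · push_neg at h1
      have hrne : ∀ i, r i ≠ Sum.inr 0 := fun i => h1 i
      obtain ⟨r₁, hr₁, hr₁inj⟩ := sum_fin1_eq_inl hrne
      by_cases h2 : ∃ j0, c j0 = Sum.inr 0
      · obtain ⟨j0, hj0⟩ := h2
        rw [Matrix.det_succ_column M j0]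
        refine Ideal.sum_mem _ fun i _ => ?_
        refine Ideal.mul_mem_left _ _ ?_
        have hcne : ∀ b, c (j0.succAbove b) ≠ Sum.inr 0 := by
          intro b hcon
          exact Fin.succAbove_ne j0 b (hc (hcon.trans hj0.symm))
        obtain ⟨c₁, hc₁, hc₁inj⟩ := sum_fin1_eq_inl hcne
        have : M.submatrix i.succAbove j0.succAbove
            = A.submatrix (r₁ ∘ i.succAbove) c₁ := by
          ext a b
          show B (r (i.succAbove a)) (c (j0.succAbove b)) = A (r₁ (i.succAbove a)) (c₁ b)
          rw [congrFun hr₁ (i.succAbove a), congrFun hc₁ b]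
          rfl
        rw [this]
        exact minor_mem_myDetIdeal A
          ((hr₁inj hr).comp (Fin.succAbove_right_injective))
          (hc₁inj (hc.comp (Fin.succAbove_right_injective)))
      · push_neg at h2
        have hcne : ∀ i, c i ≠ Sum.inr 0 := by
          intro i hcon; exact h2 i (by rw [hcon])
        obtain ⟨c₁, hc₁, hc₁inj⟩ := sum_fin1_eq_inl hcne
        have : M = A.submatrix r₁ c₁ := by
          ext a b
          show B (r a) (c b) = A (r₁ a) (c₁ b)
          rw [congrFun hr₁ a, congrFun hc₁ b]
          rfl
        rw [this]
        exact myDetIdeal_succ_le t A (minor_mem_myDetIdeal A (hr₁inj hr) (hc₁inj hc))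
  · -- easy direction
    simp only [Nat.add_sub_cancel]
    refine myDetIdeal_le _ fun r c hr hc => ?_
    have key : B.submatrix (Sum.map r id) (Sum.map c id)
        = Matrix.fromBlocks (A.submatrix r c) (w.submatrix r id) 0 1 := by
      ext a b
      rcases a with a | a <;> rcases b with b | b <;> rfl
    have hdet : ((B.submatrix (Sum.map r id) (Sum.map c id)).submatrix
        finSumFinEquiv.symm finSumFinEquiv.symm).det = (A.submatrix r c).det := by
      rw [Matrix.det_submatrix_equiv_self, key, Matrix.det_fromBlocks_zero₂₁]
      simp
    rw [← hdet, Matrix.submatrix_submatrix]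
    refine minor_mem_myDetIdeal B ?_ ?_
    · exact (Sum.map_injective.mpr ⟨hr, injective_id⟩).comp finSumFinEquiv.symm.injective
    · exact (Sum.map_injective.mpr ⟨hc, injective_id⟩).comp finSumFinEquiv.symm.injective

variable {R : Type} [CommRing R]

lemma blocks_decomp {α β : Type} (s : ℕ) (A : Matrix α β R) (V : Matrix α (Fin (s+1)) R) :
    Matrix.fromBlocks A V 0 (1 : Matrix (Fin (s+1)) (Fin (s+1)) R)
    = (Matrix.fromBlocks
        (Matrix.fromBlocks A (V.submatrix id Fin.castSucc) 0 (1 : Matrix (Fin s) (Fin s) R))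
        (Matrix.of fun x (_ : Fin 1) => Sum.elim (fun a => V a (Fin.last s)) (fun _ => (0:R)) x)
        0 1).submatrix
      (((Equiv.refl α).sumCongr finSumFinEquiv.symm).trans (Equiv.sumAssoc α (Fin s) (Fin 1)).symm)
      (((Equiv.refl β).sumCongr finSumFinEquiv.symm).trans (Equiv.sumAssoc β (Fin s) (Fin 1)).symm) := by
  have hlast : finSumFinEquiv (Sum.inr (0 : Fin 1)) = Fin.last s := by
    simp [finSumFinEquiv_apply_right, Fin.ext_iff, Fin.last]
  ext i j
  rcases i with a | i <;> rcases j with b | j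
  · rfl
  · obtain ⟨j', rfl⟩ : ∃ j', finSumFinEquiv j' = j := ⟨_, Equiv.apply_symm_apply _ _⟩
    rcases j' with t | u
    · simp [Matrix.fromBlocks, finSumFinEquiv_apply_left, Fin.castSucc]
    · have hsymm : finSumFinEquiv.symm (Fin.last s) = Sum.inr (0 : Fin 1) := by
        rw [← hlast, Equiv.symm_apply_apply]
      rw [Fin.eq_zero u]
      simp [Matrix.fromBlocks, hlast, hsymm]
  · obtain ⟨i', rfl⟩ : ∃ i', finSumFinEquiv i' = i := ⟨_, Equiv.apply_symm_apply _ _⟩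
    rcases i' with t | u <;> simp [Matrix.fromBlocks]
  · obtain ⟨i', rfl⟩ : ∃ i', finSumFinEquiv i' = i := ⟨_, Equiv.apply_symm_apply _ _⟩
    obtain ⟨j', rfl⟩ : ∃ j', finSumFinEquiv j' = j := ⟨_, Equiv.apply_symm_apply _ _⟩
    rcases i' with t | u <;> rcases j' with t' | u' <;>
      simp [Matrix.fromBlocks, Matrix.one_apply, Fin.ext_iff, Fin.eq_zero] <;> omega

lemma myDetIdeal_fromBlocks {α β : Type} (s : ℕ) (A : Matrix α β R)
    (V : Matrix α (Fin s) R) (j : ℕ) :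
    myDetIdeal j (Matrix.fromBlocks A V 0 (1 : Matrix (Fin s) (Fin s) R))
      = myDetIdeal (j - s) A := by
  induction s generalizing j with
  | zero =>
    have : Matrix.fromBlocks A V 0 (1 : Matrix (Fin 0) (Fin 0) R)
        = A.submatrix (Equiv.sumEmpty α (Fin 0)) (Equiv.sumEmpty β (Fin 0)) := by
      ext i jj
      rcases i with a | i
      · rcases jj with b | jj
        · rfl
        · exact jj.elim0
      · exact i.elim0
    rw [this, myDetIdeal_submatrix_equiv]
    simp
  | succ s ih =>
    rw [blocks_decomp s A V, myDetIdeal_submatrix_equiv, myDetIdeal_oneStep, ih]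
    congr 1
    omega
open Matrix Function

variable {R : Type} [CommRing R] {M : Type} [AddCommGroup M] [Module R M]

/-- choose a comparison matrix between two surjections -/
lemma exists_compare {α β : Type} [Fintype α] [Fintype β] [DecidableEq β]
    (π : (α → R) →ₗ[R] M) (π' : (β → R) →ₗ[R] M) (hπ : Function.Surjective π) :
    ∃ V : Matrix α β R, π' = π ∘ₗ V.mulVecLin := by
  have h : ∀ j : β, ∃ v : α → R, π v = π' (Pi.single j 1) := fun j => hπ _
  choose v hv using h
  refine ⟨Matrix.of fun i j => v j i, ?_⟩
  refine Module.Basis.ext (Pi.basisFun R β) fun j => ?_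
  rw [Pi.basisFun_apply]
  simp only [LinearMap.comp_apply, Matrix.mulVecLin_apply, Matrix.mulVec_single]
  rw [← hv j]
  congr 1
  ext i
  simp [mul_comm]

variable {α β β₁ β₂ : Type} [Fintype α] [Fintype β] [Fintype β₁] [Fintype β₂]
variable [DecidableEq α] [DecidableEq β]

/-- the combined surjection -/
noncomputable def combMap (π : (α → R) →ₗ[R] M) (V : Matrix α β R) :
    ((α ⊕ β) → R) →ₗ[R] M :=
  π ∘ₗ (LinearMap.funLeft R R Sum.inl + V.mulVecLin ∘ₗ LinearMap.funLeft R R Sum.inr)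

omit [DecidableEq α] [DecidableEq β] [Fintype α] in
lemma combMap_apply (π : (α → R) →ₗ[R] M) (V : Matrix α β R) (x : (α ⊕ β) → R) :
    combMap π V x = π (x ∘ Sum.inl + V.mulVec (x ∘ Sum.inr)) := rfl

lemma combMap_surjective (π : (α → R) →ₗ[R] M) (V : Matrix α β R)
    (hπ : Function.Surjective π) : Function.Surjective (combMap π V) := by
  intro m
  obtain ⟨z, hz⟩ := hπ m
  refine ⟨Sum.elim z 0, ?_⟩
  rw [combMap_apply]
  have h1 : (Sum.elim z (0 : β → R)) ∘ Sum.inl = z := rfl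
  have h2 : (Sum.elim z (0 : β → R)) ∘ Sum.inr = 0 := rfl
  rw [h1, h2, Matrix.mulVec_zero, add_zero, hz]

lemma combMap_ker (π : (α → R) →ₗ[R] M) (A : Matrix α β₁ R) (V : Matrix α β R)
    (hker : LinearMap.ker π = LinearMap.range A.mulVecLin) :
    LinearMap.ker (combMap π V)
      = LinearMap.range (Matrix.fromBlocks A (-V) 0 (1 : Matrix β β R)).mulVecLin := by
  ext x
  simp only [LinearMap.mem_ker, LinearMap.mem_range, combMap_apply]
  constructor
  · intro hx
    have : x ∘ Sum.inl + V.mulVec (x ∘ Sum.inr) ∈ LinearMap.ker π := hx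
    rw [hker] at this
    obtain ⟨y1, hy1⟩ := this
    refine ⟨Sum.elim y1 (x ∘ Sum.inr), ?_⟩
    rw [Matrix.mulVecLin_apply, Matrix.fromBlocks_mulVec]
    rw [Matrix.mulVecLin_apply] at hy1
    funext i
    rcases i with i | i
    · show (A.mulVec y1 + (-V).mulVec (x ∘ Sum.inr)) i = x (Sum.inl i)
      rw [Matrix.neg_mulVec, hy1]
      show (x ∘ Sum.inl) i + V.mulVec (x ∘ Sum.inr) i + _ = _
      simp
    · show ((0 : Matrix β β₁ R).mulVec y1 + (1 : Matrix β β R).mulVec (x ∘ Sum.inr)) i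
        = x (Sum.inr i)
      rw [Matrix.zero_mulVec, Matrix.one_mulVec]
      simp
  · rintro ⟨u, rfl⟩
    rw [Matrix.mulVecLin_apply, ← LinearMap.mem_ker, hker]
    refine ⟨u ∘ Sum.inl, ?_⟩
    rw [Matrix.mulVecLin_apply]
    have h1 : (Matrix.fromBlocks A (-V) 0 (1 : Matrix β β R)).mulVec u ∘ Sum.inl
        = A.mulVec (u ∘ Sum.inl) - V.mulVec (u ∘ Sum.inr) := by
      funext i
      show (Matrix.fromBlocks A (-V) 0 (1 : Matrix β β R)).mulVec u (Sum.inl i) = _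
      have : u = Sum.elim (u ∘ Sum.inl) (u ∘ Sum.inr) := by
        funext t; rcases t with t | t <;> rfl
      rw [this, Matrix.fromBlocks_mulVec]
      show (A.mulVec (u ∘ Sum.inl) + (-V).mulVec (u ∘ Sum.inr)) i = _
      rw [Matrix.neg_mulVec]
      simp [sub_eq_add_neg]
    have h2 : (Matrix.fromBlocks A (-V) 0 (1 : Matrix β β R)).mulVec u ∘ Sum.inr
        = u ∘ Sum.inr := by
      funext i
      show (Matrix.fromBlocks A (-V) 0 (1 : Matrix β β R)).mulVec u (Sum.inr i) = _
      have : u = Sum.elim (u ∘ Sum.inl) (u ∘ Sum.inr) := by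
        funext t; rcases t with t | t <;> rfl
      rw [this, Matrix.fromBlocks_mulVec]
      show ((0 : Matrix β β₁ R).mulVec (u ∘ Sum.inl)
        + (1 : Matrix β β R).mulVec (u ∘ Sum.inr)) i = _
      rw [Matrix.zero_mulVec, Matrix.one_mulVec]
      simp
    rw [h1, h2]
    abel_nf

/-- the combined surjection, expressed from the second factor -/
noncomputable def combMap' (π' : (β → R) →ₗ[R] M) (W : Matrix β α R) :
    ((α ⊕ β) → R) →ₗ[R] M :=
  π' ∘ₗ (LinearMap.funLeft R R Sum.inr + W.mulVecLin ∘ₗ LinearMap.funLeft R R Sum.inl)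

omit [DecidableEq α] [DecidableEq β] [Fintype β] in
lemma combMap'_apply (π' : (β → R) →ₗ[R] M) (W : Matrix β α R) (x : (α ⊕ β) → R) :
    combMap' π' W x = π' (x ∘ Sum.inr + W.mulVec (x ∘ Sum.inl)) := rfl

omit [DecidableEq β] in
lemma combMap'_ker (π' : (β → R) →ₗ[R] M) (A' : Matrix β β₂ R) (W : Matrix β α R)
    (hker : LinearMap.ker π' = LinearMap.range A'.mulVecLin) :
    LinearMap.ker (combMap' π' W)
      = LinearMap.range (Matrix.fromBlocks (0 : Matrix α β₂ R) (1 : Matrix α α R)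
          A' (-W)).mulVecLin := by
  ext x
  simp only [LinearMap.mem_ker, LinearMap.mem_range, combMap'_apply]
  constructor
  · intro hx
    have : x ∘ Sum.inr + W.mulVec (x ∘ Sum.inl) ∈ LinearMap.ker π' := hx
    rw [hker] at this
    obtain ⟨y1, hy1⟩ := this
    rw [Matrix.mulVecLin_apply] at hy1
    refine ⟨Sum.elim y1 (x ∘ Sum.inl), ?_⟩
    rw [Matrix.mulVecLin_apply, Matrix.fromBlocks_mulVec]
    funext i
    rcases i with i | i
    · show ((0 : Matrix α β₂ R).mulVec y1 + (1 : Matrix α α R).mulVec (x ∘ Sum.inl)) i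
        = x (Sum.inl i)
      rw [Matrix.zero_mulVec, Matrix.one_mulVec]
      simp
    · show (A'.mulVec y1 + (-W).mulVec (x ∘ Sum.inl)) i = x (Sum.inr i)
      rw [Matrix.neg_mulVec, hy1]
      show (x ∘ Sum.inr) i + W.mulVec (x ∘ Sum.inl) i + _ = _
      simp
  · rintro ⟨u, rfl⟩
    rw [Matrix.mulVecLin_apply, ← LinearMap.mem_ker, hker]
    refine ⟨u ∘ Sum.inl, ?_⟩
    rw [Matrix.mulVecLin_apply]
    have hu : u = Sum.elim (u ∘ Sum.inl) (u ∘ Sum.inr) := by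
      funext t; rcases t with t | t <;> rfl
    set C2 := Matrix.fromBlocks (0 : Matrix α β₂ R) (1 : Matrix α α R) A' (-W) with hC2
    have h1 : C2.mulVec u ∘ Sum.inl = u ∘ Sum.inr := by
      funext i
      show C2.mulVec u (Sum.inl i) = _
      rw [hu, hC2, Matrix.fromBlocks_mulVec]
      show ((0 : Matrix α β₂ R).mulVec (u ∘ Sum.inl)
        + (1 : Matrix α α R).mulVec (u ∘ Sum.inr)) i = _
      rw [Matrix.zero_mulVec, Matrix.one_mulVec]
      simp
    have h2 : C2.mulVec u ∘ Sum.inr = A'.mulVec (u ∘ Sum.inl) - W.mulVec (u ∘ Sum.inr) := by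
      funext i
      show C2.mulVec u (Sum.inr i) = _
      rw [hu, hC2, Matrix.fromBlocks_mulVec]
      show (A'.mulVec (u ∘ Sum.inl) + (-W).mulVec (u ∘ Sum.inr)) i = _
      rw [Matrix.neg_mulVec]
      simp [sub_eq_add_neg]
    rw [h1, h2]
    abel_nf

omit [DecidableEq α] [DecidableEq β] in
lemma combMap_eq_combMap' (π : (α → R) →ₗ[R] M) (π' : (β → R) →ₗ[R] M)
    (V : Matrix α β R) (W : Matrix β α R)
    (hV : π' = π ∘ₗ V.mulVecLin) (hW : π = π' ∘ₗ W.mulVecLin) :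
    combMap π V = combMap' π' W := by
  ext x
  rw [combMap_apply, combMap'_apply, map_add, map_add]
  have h1 : π (V.mulVec (x ∘ Sum.inr)) = π' (x ∘ Sum.inr) := by
    rw [hV]; rfl
  have h2 : π (x ∘ Sum.inl) = π' (W.mulVec (x ∘ Sum.inl)) := by
    rw [hW]; rfl
  rw [h1, h2, add_comm]
section
variable {R : Type} [CommRing R] {M : Type} [AddCommGroup M] [Module R M]

theorem myDetIdeal_invariance {m n n₁ n₂ : ℕ}
    (π : (Fin m → R) →ₗ[R] M) (A : Matrix (Fin m) (Fin n₁) R)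
    (hπ : Function.Surjective π) (hA : LinearMap.ker π = LinearMap.range A.mulVecLin)
    (π' : (Fin n → R) →ₗ[R] M) (A' : Matrix (Fin n) (Fin n₂) R)
    (hπ' : Function.Surjective π') (hA' : LinearMap.ker π' = LinearMap.range A'.mulVecLin)
    (k : ℕ) :
    myDetIdeal (m - k) A = myDetIdeal (n - k) A' := by
  obtain ⟨V, hV⟩ := exists_compare π π' hπ
  obtain ⟨W, hW⟩ := exists_compare π' π hπ'
  set B1 := Matrix.fromBlocks A (-V) 0 (1 : Matrix (Fin n) (Fin n) R) with hB1
  set C2 := Matrix.fromBlocks (0 : Matrix (Fin m) (Fin n₂) R) (1 : Matrix (Fin m) (Fin m) R)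
    A' (-W) with hC2
  have h1 := combMap_ker π A V hA
  have h2 := combMap'_ker π' A' W hA'
  have heq := combMap_eq_combMap' π π' V W hV hW
  have hrange : LinearMap.range B1.mulVecLin = LinearMap.range C2.mulVecLin := by
    rw [← h1, ← h2, heq]
  set j := (m + n) - k with hj
  have e1 : myDetIdeal j B1 = myDetIdeal (j - n) A := myDetIdeal_fromBlocks n A (-V) j
  have e2 : myDetIdeal j C2 = myDetIdeal (j - m) A' := by
    have hsub : C2 = (Matrix.fromBlocks A' (-W) 0
        (1 : Matrix (Fin m) (Fin m) R)).submatrix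
        (Equiv.sumComm (Fin m) (Fin n)) (Equiv.refl (Fin n₂ ⊕ Fin m)) := by
      ext i jj
      rcases i with a | b <;> rcases jj with x | y <;> rfl
    rw [hsub, myDetIdeal_submatrix_equiv, myDetIdeal_fromBlocks]
  have e3 : myDetIdeal j B1 = myDetIdeal j C2 := myDetIdeal_eq_of_range_eq j B1 C2 hrange
  have hjn : j - n = m - k := by omega
  have hjm : j - m = n - k := by omega
  rw [← hjn, ← hjm, ← e1, ← e2, e3]
end

lemma strictMono_fin_le {t n : ℕ} {f : Fin t → Fin n} (hf : StrictMono f) :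
    ∀ i : Fin t, (i : ℕ) ≤ (f i : ℕ) := by
  have key : ∀ (v : ℕ) (h : v < t), v ≤ (f ⟨v, h⟩ : ℕ) := by
    intro v
    induction v with
    | zero => intro h; exact Nat.zero_le _
    | succ v ih =>
      intro h
      have h' : v < t := Nat.lt_of_succ_lt h
      have h1 := ih h'
      have h2 : f ⟨v, h'⟩ < f ⟨v + 1, h⟩ := hf (by simp [Fin.lt_def])
      have := Fin.lt_def.mp h2
      omega
  intro i
  have := key i.val i.isLt
  simpa using this

lemma prod_first_dvd {n t : ℕ} (ht : t ≤ n) (d : Fin n → R)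
    (hdvd : ∀ i j : Fin n, i ≤ j → d i ∣ d j) {v : Fin t → Fin n} (hv : Injective v) :
    (∏ i : Fin t, d (Fin.castLE ht i)) ∣ ∏ i : Fin t, d (v i) := by
  classical
  set s : Finset (Fin n) := Finset.image v Finset.univ with hs
  have hcard : s.card = t := by
    rw [hs, Finset.card_image_of_injective _ hv, Finset.card_fin]
  set mo := s.orderIsoOfFin hcard with hmo
  have hg : StrictMono (fun i : Fin t => (mo i : Fin n)) :=
    fun a b hab => Subtype.coe_lt_coe.mpr (mo.strictMono hab)
  have h1 : ∏ i : Fin t, d (v i) = ∏ x ∈ s, d x := by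
    rw [hs, Finset.prod_image (fun a _ b _ h => hv h)]
  have h2 : ∏ x ∈ s, d x = ∏ i : Fin t, d (mo i) := by
    rw [← Finset.prod_coe_sort s d]
    exact (Equiv.prod_comp mo.toEquiv (fun x : s => d x)).symm
  rw [h1, h2]
  refine Finset.prod_dvd_prod_of_dvd _ _ fun i _ => ?_
  refine hdvd _ _ ?_
  rw [Fin.le_def]
  exact le_trans (by simp) (strictMono_fin_le hg i)

lemma filter_lt_eq_image {n t : ℕ} (ht : t ≤ n) :
    Finset.univ.filter (fun i : Fin n => (i : ℕ) < t)
      = Finset.image (Fin.castLE ht) Finset.univ := by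
  ext i
  constructor
  · intro hmem
    have h : (i : ℕ) < t := by simpa using hmem
    exact Finset.mem_image.mpr ⟨⟨i.val, h⟩, Finset.mem_univ _, Fin.ext rfl⟩
  · intro hmem
    obtain ⟨j, -, rfl⟩ := Finset.mem_image.mp hmem
    simpa using j.isLt

lemma myDetIdeal_diagonal {n t : ℕ} (ht : t ≤ n) (d : Fin n → R)
    (hdvd : ∀ i j : Fin n, i ≤ j → d i ∣ d j) :
    myDetIdeal t (Matrix.diagonal d)
      = Ideal.span {∏ i ∈ Finset.univ.filter (fun i : Fin n => (i : ℕ) < t), d i} := by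
  have hP : ∏ i ∈ Finset.univ.filter (fun i : Fin n => (i : ℕ) < t), d i
      = ∏ i : Fin t, d (Fin.castLE ht i) := by
    rw [filter_lt_eq_image ht, Finset.prod_image
      (fun a _ b _ h => Fin.castLE_injective ht h)]
  refine le_antisymm ?_ ?_
  · refine myDetIdeal_le _ fun r c hr hc => ?_
    rw [Ideal.mem_span_singleton, hP, Matrix.det_apply']
    refine Finset.dvd_sum fun σ _ => ?_
    refine Dvd.dvd.mul_left ?_ _
    by_cases hall : ∀ i, r (σ i) = c i
    · have : ∀ i, (Matrix.diagonal d).submatrix r c (σ i) i = d (c i) := by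
        intro i
        rw [Matrix.submatrix_apply, hall i, Matrix.diagonal_apply_eq]
      rw [Finset.prod_congr rfl fun i _ => this i]
      exact prod_first_dvd ht d hdvd hc
    · push_neg at hall
      obtain ⟨i0, hi0⟩ := hall
      have : (Matrix.diagonal d).submatrix r c (σ i0) i0 = 0 := by
        rw [Matrix.submatrix_apply, Matrix.diagonal_apply_ne _ hi0]
      have hzero := Finset.prod_eq_zero
        (f := fun i => (Matrix.diagonal d).submatrix r c (σ i) i) (Finset.mem_univ i0) this
      rw [hzero]
      exact dvd_zero _
  · rw [Ideal.span_le, Set.singleton_subset_iff, hP]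
    have : (∏ i : Fin t, d (Fin.castLE ht i))
        = ((Matrix.diagonal d).submatrix (Fin.castLE ht) (Fin.castLE ht)).det := by
      rw [Matrix.submatrix_diagonal _ _ (Fin.castLE_injective ht), Matrix.det_diagonal]
      rfl
    rw [this]
    exact minor_mem_myDetIdeal _ (Fin.castLE_injective ht) (Fin.castLE_injective ht)

lemma diag_presentation (n : ℕ) (d : Fin n → R) :
    ∃ π : (Fin n → R) →ₗ[R] (∀ i : Fin n, R ⧸ Ideal.span {d i}),
      Function.Surjective π ∧
      LinearMap.ker π = LinearMap.range (Matrix.diagonal d).mulVecLin := by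
  refine ⟨LinearMap.pi (fun i => (Ideal.span {d i}).mkQ ∘ₗ LinearMap.proj i), ?_, ?_⟩
  · intro y
    have : ∀ i, ∃ r : R, (Ideal.span {d i}).mkQ r = y i :=
      fun i => Submodule.mkQ_surjective _ (y i)
    choose x hx using this
    exact ⟨x, funext fun i => hx i⟩
  · ext x
    simp only [LinearMap.mem_ker, LinearMap.mem_range]
    constructor
    · intro hx
      have hmem : ∀ i, x i ∈ Ideal.span {d i} := by
        intro i
        have h0 := congrFun hx i
        have h1 : (Ideal.span {d i}).mkQ (x i) = 0 := by
          simpa [LinearMap.pi_apply] using h0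
        rw [Submodule.mkQ_apply, Submodule.Quotient.mk_eq_zero] at h1
        exact h1
      have : ∀ i, ∃ c, x i = d i * c := by
        intro i
        obtain ⟨c, hc⟩ := Ideal.mem_span_singleton'.mp (hmem i)
        exact ⟨c, by rw [← hc, mul_comm]⟩
      choose y hy using this
      refine ⟨y, ?_⟩
      funext i
      rw [Matrix.mulVecLin_apply, Matrix.mulVec_diagonal, ← hy i]
    · rintro ⟨y, rfl⟩
      funext i
      simp only [LinearMap.pi_apply, LinearMap.comp_apply, LinearMap.proj_apply,
        Matrix.mulVecLin_apply, Matrix.mulVec_diagonal]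
      rw [Pi.zero_apply, Submodule.mkQ_apply, Submodule.Quotient.mk_eq_zero]
      exact Ideal.mem_span_singleton'.mpr ⟨y i, mul_comm _ _⟩

end FittingAux

lemma detIdeal_eq_myDetIdeal {R : Type} [CommRing R] {m n : ℕ} (k : ℕ)
    (A : Matrix (Fin m) (Fin n) R) : detIdeal k A = myDetIdeal k A := rfl

/-- Let `R` be a principal ideal domain and
`M = R/(d₁) × … × R/(dₙ)` a finitely generated torsion `R`-module with
`d₁ ∣ d₂ ∣ … ∣ dₙ` (all `dᵢ ≠ 0`).  Then for `0 ≤ k ≤ n` the `k`-th Fitting ideal of `M`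
is the principal ideal generated by `d₁ ⋯ d_{n−k}` (empty product `= 1`, so
`Fitⁿ_R(M) = R`). -/
theorem statement12 {R : Type} [CommRing R] [IsDomain R] [IsPrincipalIdealRing R]
    {n : ℕ} (d : Fin n → R) (hd : ∀ i, d i ≠ 0)
    (hdvd : ∀ i j : Fin n, i ≤ j → d i ∣ d j)
    (k : ℕ) (hk : k ≤ n) :
    fittingIdeal R (∀ i : Fin n, R ⧸ Ideal.span {d i}) k
      = Ideal.span {∏ i ∈ Finset.univ.filter (fun i : Fin n => (i : ℕ) < n - k), d i} := by
  obtain ⟨π0, hπ0, hker0⟩ := diag_presentation n d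
  have hdiag : myDetIdeal (n - k) (Matrix.diagonal d)
      = Ideal.span {∏ i ∈ Finset.univ.filter (fun i : Fin n => (i : ℕ) < n - k), d i} :=
    myDetIdeal_diagonal (Nat.sub_le n k) d hdvd
  rw [fittingIdeal]
  apply le_antisymm
  · refine sSup_le ?_
    rintro I ⟨m, n', A, ⟨π, hπ, hker⟩, rfl⟩
    rw [detIdeal_eq_myDetIdeal,
      myDetIdeal_invariance π A hπ hker π0 (Matrix.diagonal d) hπ0 hker0 k, hdiag]
  · refine le_sSup ?_
    exact ⟨n, n, Matrix.diagonal d, ⟨π0, hπ0, hker0⟩, by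
      rw [detIdeal_eq_myDetIdeal, hdiag]⟩
end

section
/- Let Y/X be an abelian cover of finite graphs with Galois group G, and let η_{Y/X}(u) = det_{Z[G]}(I − 𝒜u + (𝒟 − I)u²) ∈ Z[G][u], where 𝒜 and 𝒟 are the adjacency and degree operators on the free Z[G]-module Div(Y). Then ι(η_{Y/X}(u)) = η_{Y/X}(u), where ι is the involution of Z[G][u] induced by σ ↦ σ⁻¹ on G. Consequently, for any commutative ring R and any R-valued character ψ of G, one has h_{Y/X}(u,ψ) = h_{Y/X}(u,ψ*), where h_{Y/X}(u,ψ) = ψ(η_{Y/X}(u)) and ψ*(σ) = ψ(σ⁻¹). -/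
open Polynomial

/-- The polynomial `η_{Y/X}(u) = det_{ℤ[G]}(I − 𝒜u + (𝒟 − I)u²) ∈ ℤ[G][u]` of an abelian
cover, computed with respect to the `ℤ[G]`-basis `(w 1, …, w g)` of `Div(Y)` given by
chosen lifts of the vertices of `X`. -/
noncomputable def etaPoly {G V E : Type} [CommGroup G] [Fintype G] [Fintype E]
    [MulAction G V] (o t : E → V) (g : ℕ) (w : Fin g → V) :
    Polynomial (MonoidAlgebra ℤ G) :=
  Matrix.det (Matrix.of fun i j : Fin g =>
    (if i = j then (1 : Polynomial (MonoidAlgebra ℤ G)) else 0)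
    - Polynomial.C (∑ σ : G, MonoidAlgebra.single σ⁻¹
        ((Nat.card {ε : E // o ε = σ • w j ∧ t ε = w i} : ℤ))) * Polynomial.X
    + (if i = j then
        Polynomial.C ((Nat.card {ε : E // o ε = w i} : MonoidAlgebra ℤ G) - 1)
          * Polynomial.X ^ 2
       else 0))

/-- The ring morphism `ℤ[G][u] → R[u]` induced coefficientwise by an `R`-valued character
`ψ` of `G`; `h_{Y/X}(u, ψ)` is its value on `η_{Y/X}(u)`. -/
noncomputable def charPolyMap {G : Type} [CommGroup G] {R : Type} [CommRing R]
    (ψ : G →* Rˣ) (q : Polynomial (MonoidAlgebra ℤ G)) : Polynomial R :=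
  Polynomial.map (MonoidAlgebra.lift ℤ R G ((Units.coeHom R).comp ψ)).toRingHom q

/-- Auxiliary bijection: `ε ↦ σ • bar ε` identifies edges from `σ⁻¹ • a` to `b` with
edges from `σ • b` to `a`. -/
lemma statement16_card_swap {G V E : Type} [CommGroup G] [MulAction G V] [MulAction G E]
    (o t : E → V) (bar : E → E)
    (hbar : ∀ ε, bar (bar ε) = ε)
    (hob : ∀ ε, o (bar ε) = t ε) (htb : ∀ ε, t (bar ε) = o ε)
    (ho : ∀ (σ : G) (ε : E), o (σ • ε) = σ • o ε)
    (ht : ∀ (σ : G) (ε : E), t (σ • ε) = σ • t ε)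
    (σ : G) (a b : V) :
    Nat.card {ε : E // o ε = σ⁻¹ • a ∧ t ε = b} =
    Nat.card {ε : E // o ε = σ • b ∧ t ε = a} := by
  apply Nat.card_congr
  refine ⟨fun x => ⟨σ • bar x.1, ?_, ?_⟩, fun y => ⟨bar (σ⁻¹ • y.1), ?_, ?_⟩, ?_, ?_⟩
  · rw [ho, hob, x.2.2]
  · rw [ht, htb, x.2.1, smul_inv_smul]
  · rw [hob, ht, y.2.2]
  · rw [htb, ho, y.2.1, inv_smul_smul]
  · intro x; ext; simp [inv_smul_smul, hbar]
  · intro y; ext; simp [hbar, smul_inv_smul]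

/-- For an abelian cover `Y/X` of finite graphs with Galois group `G`,
the polynomial `η_{Y/X}(u)` is fixed by the involution `ι` of `ℤ[G][u]` induced by
`σ ↦ σ⁻¹`; consequently, for any commutative ring `R` and `R`-valued character `ψ` of `G`,
`h_{Y/X}(u,ψ) = h_{Y/X}(u,ψ*)`, where `ψ*(σ) = ψ(σ⁻¹)`. -/
theorem statement16 {G V E : Type} [CommGroup G] [Fintype G] [Fintype V] [Fintype E]
    [MulAction G V] [MulAction G E]
    (o t : E → V) (bar : E → E)
    (hbar : ∀ ε, bar (bar ε) = ε)
    (hob : ∀ ε, o (bar ε) = t ε) (htb : ∀ ε, t (bar ε) = o ε)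
    (ho : ∀ (σ : G) (ε : E), o (σ • ε) = σ • o ε)
    (ht : ∀ (σ : G) (ε : E), t (σ • ε) = σ • t ε)
    (g : ℕ) (w : Fin g → V)
    (hbasis : ∀ v : V, ∃! q : Fin g × G, q.2 • w q.1 = v) :
    Polynomial.map (MonoidAlgebra.mapDomainRingHom ℤ (invMonoidHom (α := G)))
        (etaPoly o t g w) = etaPoly o t g w ∧
    ∀ (R : Type) [CommRing R] (ψ : G →* Rˣ),
      charPolyMap ψ (etaPoly o t g w)
        = charPolyMap (ψ.comp (invMonoidHom (α := G))) (etaPoly o t g w) := by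
  set f := MonoidAlgebra.mapDomainRingHom ℤ (invMonoidHom (α := G)) with hf
  have hsingle : ∀ (σ : G) (n : ℤ),
      f (MonoidAlgebra.single σ n) = MonoidAlgebra.single σ⁻¹ n := by
    intro σ n
    simp [hf, MonoidAlgebra.mapDomainRingHom, invMonoidHom]
  have hA : ∀ i j : Fin g,
      f (∑ σ : G, MonoidAlgebra.single σ⁻¹
          ((Nat.card {ε : E // o ε = σ • w j ∧ t ε = w i} : ℤ)))
      = ∑ σ : G, MonoidAlgebra.single σ⁻¹
          ((Nat.card {ε : E // o ε = σ • w i ∧ t ε = w j} : ℤ)) := by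
    intro i j
    rw [map_sum]
    have h1 : ∀ σ : G, f (MonoidAlgebra.single σ⁻¹
        ((Nat.card {ε : E // o ε = σ • w j ∧ t ε = w i} : ℤ)))
        = MonoidAlgebra.single σ
          ((Nat.card {ε : E // o ε = σ • w j ∧ t ε = w i} : ℤ)) := by
      intro σ; rw [hsingle, inv_inv]
    simp only [h1]
    rw [← Equiv.sum_comp (Equiv.inv G) (fun σ => MonoidAlgebra.single σ
        ((Nat.card {ε : E // o ε = σ • w j ∧ t ε = w i} : ℤ)))]
    refine Finset.sum_congr rfl fun σ _ => ?_
    simp only [Equiv.inv_apply]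
    congr 1
    exact_mod_cast congrArg (Nat.cast (R := ℤ))
      (statement16_card_swap o t bar hbar hob htb ho ht σ (w j) (w i))
  have key : Polynomial.map f (etaPoly o t g w) = etaPoly o t g w := by
    unfold etaPoly
    rw [← Polynomial.coe_mapRingHom, RingHom.map_det]
    rw [← Matrix.det_transpose (Matrix.of fun i j : Fin g =>
      (if i = j then (1 : Polynomial (MonoidAlgebra ℤ G)) else 0)
      - Polynomial.C (∑ σ : G, MonoidAlgebra.single σ⁻¹
          ((Nat.card {ε : E // o ε = σ • w j ∧ t ε = w i} : ℤ))) * Polynomial.X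
      + (if i = j then
          Polynomial.C ((Nat.card {ε : E // o ε = w i} : MonoidAlgebra ℤ G) - 1)
            * Polynomial.X ^ 2
         else 0))]
    congr 1
    ext i j
    simp only [RingHom.mapMatrix_apply, Matrix.map_apply, Matrix.transpose_apply,
      Matrix.of_apply, Polynomial.coe_mapRingHom]
    rw [Polynomial.map_add, Polynomial.map_sub, Polynomial.map_mul, Polynomial.map_C,
      Polynomial.map_X, apply_ite (Polynomial.map f), apply_ite (Polynomial.map f),
      Polynomial.map_one, Polynomial.map_zero, Polynomial.map_mul, Polynomial.map_C,
      Polynomial.map_pow, Polynomial.map_X]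
    have hD : f ((Nat.card {ε : E // o ε = w i} : MonoidAlgebra ℤ G) - 1)
        = (Nat.card {ε : E // o ε = w i} : MonoidAlgebra ℤ G) - 1 := by
      rw [map_sub, map_natCast, map_one]
    rw [hA, hD]
    by_cases h : i = j
    · subst h; simp
    · simp [h, Ne.symm h]
  refine ⟨key, fun R _ ψ => ?_⟩
  have hlift : (MonoidAlgebra.lift ℤ R G
        ((Units.coeHom R).comp (ψ.comp (invMonoidHom (α := G))))).toRingHom
      = ((MonoidAlgebra.lift ℤ R G ((Units.coeHom R).comp ψ)).toRingHom).comp f := by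
    apply MonoidAlgebra.ringHom_ext <;> intro x
    · simp [hf, MonoidAlgebra.mapDomainRingHom]
    · simp only [RingHom.coe_comp, Function.comp_apply]
      rw [hsingle x 1]
      simp [MonoidAlgebra.lift_single, invMonoidHom]
  unfold charPolyMap
  rw [hlift, ← Polynomial.map_map, key]
end

section
/- Let p be an odd prime and Y/X a Galois cover of finite connected graphs with Galois group Δ ≅ F_p^×, with A the p-primary subgroup of Pic⁰(Y). For the trivial character ψ₀, the component e_{ψ₀}A is isomorphic as a Z_p-module to the p-primary subgroup of Pic⁰(X); in particular #e_{ψ₀}A equals the p-part of the number of spanning trees of X. -/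
section GraphScaffold

variable {Δ V E : Type}

/-- `a_u(v)`: the number of directed edges from `v` to `u`, as an integer. -/
noncomputable def edgeCnt [Fintype E] (o t : E → V) (u v : V) : ℤ :=
  Nat.card {ε : E // o ε = v ∧ t ε = u}

/-- The valence of the vertex `u`. -/
noncomputable def valCnt [Fintype E] (o : E → V) (u : V) : ℤ :=
  Nat.card {ε : E // o ε = u}

/-- The Laplacian operator `ℒ = 𝒟 − 𝒜` on `Div(Y) = (V → ℤ)`. -/
noncomputable def lapHom [Fintype V] [Fintype E] (o t : E → V) : (V → ℤ) →+ (V → ℤ) :=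
  AddMonoidHom.mk' (fun D u => valCnt o u * D u - ∑ v : V, edgeCnt o t u v * D v)
    (by
      intro D₁ D₂
      funext u
      simp only [Pi.add_apply, mul_add, Finset.sum_add_distrib]
      ring)

/-- The degree map `Div(Y) → ℤ`. -/
def degHom [Fintype V] : (V → ℤ) →+ ℤ :=
  AddMonoidHom.mk' (fun D => ∑ v : V, D v)
    (by intro a b; simp [Finset.sum_add_distrib])

/-- `Div⁰(Y)`, the divisors of degree zero. -/
def div0 (V : Type) [Fintype V] : AddSubgroup (V → ℤ) := (degHom (V := V)).ker

/-- The principal divisors `ℒ(Div(Y))`, viewed inside `Div⁰(Y)`. -/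
noncomputable def prSub [Fintype V] [Fintype E] (o t : E → V) : AddSubgroup (div0 V) :=
  ((lapHom o t).range.comap (div0 V).subtype)

/-- The degree zero Picard group `Pic⁰(Y) = Div⁰(Y)/ℒ(Div(Y))`. -/
noncomputable abbrev pic0 [Fintype V] [Fintype E] (o t : E → V) : Type :=
  div0 V ⧸ prSub o t

/-- The action of `σ ∈ Δ` on divisors. -/
def shiftHom [Group Δ] [MulAction Δ V] (σ : Δ) : (V → ℤ) →+ (V → ℤ) :=
  AddMonoidHom.mk' (fun D v => D (σ⁻¹ • v)) (by intro a b; rfl)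

/-- The action of `σ ∈ Δ` on degree zero divisors. -/
def shiftDiv0 [Fintype V] [Group Δ] [MulAction Δ V] (σ : Δ) : div0 V →+ div0 V :=
  AddMonoidHom.mk'
    (fun D => ⟨shiftHom σ D.1, by
      have h2 : ∑ v : V, (D : V → ℤ) v = 0 := D.2
      show degHom _ = 0
      exact (Fintype.sum_equiv (MulAction.toPerm σ⁻¹)
        (fun v => (D : V → ℤ) (σ⁻¹ • v)) (fun v => (D : V → ℤ) v)
        (fun v => rfl)).trans h2⟩)
    (by intro a b; exact Subtype.ext (map_add (shiftHom σ) _ _))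


/-- Equivariance of the edge count under the Galois action. -/
theorem edgeCnt_smul [Fintype E] [Group Δ] [MulAction Δ V] [MulAction Δ E]
    (o t : E → V)
    (ho : ∀ (σ : Δ) (ε : E), o (σ • ε) = σ • o ε)
    (ht : ∀ (σ : Δ) (ε : E), t (σ • ε) = σ • t ε)
    (σ : Δ) (u v : V) :
    edgeCnt o t (σ • u) (σ • v) = edgeCnt o t u v := by
  unfold edgeCnt
  congr 1
  refine Nat.card_congr (Equiv.symm ?_)
  refine ⟨fun x => ⟨σ • x.1, ?_, ?_⟩, fun x => ⟨σ⁻¹ • x.1, ?_, ?_⟩, ?_, ?_⟩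
  · rw [ho, x.2.1]
  · rw [ht, x.2.2]
  · rw [ho, x.2.1, inv_smul_smul]
  · rw [ht, x.2.2, inv_smul_smul]
  · intro x; exact Subtype.ext (inv_smul_smul σ x.1)
  · intro x; exact Subtype.ext (smul_inv_smul σ x.1)

/-- Equivariance of the valence under the Galois action. -/
theorem valCnt_smul [Fintype E] [Group Δ] [MulAction Δ V] [MulAction Δ E]
    (o : E → V)
    (ho : ∀ (σ : Δ) (ε : E), o (σ • ε) = σ • o ε)
    (σ : Δ) (u : V) :
    valCnt o (σ • u) = valCnt o u := by
  unfold valCnt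
  congr 1
  refine Nat.card_congr (Equiv.symm ?_)
  refine ⟨fun x => ⟨σ • x.1, ?_⟩, fun x => ⟨σ⁻¹ • x.1, ?_⟩, ?_, ?_⟩
  · rw [ho, x.2]
  · rw [ho, x.2, inv_smul_smul]
  · intro x; exact Subtype.ext (inv_smul_smul σ x.1)
  · intro x; exact Subtype.ext (smul_inv_smul σ x.1)

/-- The Laplacian commutes with the Galois action. -/
theorem lap_shift [Fintype V] [Fintype E] [Group Δ] [MulAction Δ V] [MulAction Δ E]
    (o t : E → V)
    (ho : ∀ (σ : Δ) (ε : E), o (σ • ε) = σ • o ε)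
    (ht : ∀ (σ : Δ) (ε : E), t (σ • ε) = σ • t ε)
    (σ : Δ) (D : V → ℤ) :
    lapHom o t (shiftHom σ D) = shiftHom σ (lapHom o t D) := by
  funext u
  show valCnt o u * D (σ⁻¹ • u) - ∑ v : V, edgeCnt o t u v * D (σ⁻¹ • v)
      = valCnt o (σ⁻¹ • u) * D (σ⁻¹ • u) - ∑ v : V, edgeCnt o t (σ⁻¹ • u) v * D v
  rw [valCnt_smul o ho σ⁻¹ u]
  congr 1
  refine Fintype.sum_equiv (MulAction.toPerm σ⁻¹) _ _ (fun v => ?_)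
  show edgeCnt o t u v * D (σ⁻¹ • v) = edgeCnt o t (σ⁻¹ • u) (σ⁻¹ • v) * D (σ⁻¹ • v)
  rw [edgeCnt_smul o t ho ht σ⁻¹ u v]

/-- The induced action of `σ ∈ Δ` on `Pic⁰(Y)`; this is well defined because the action of
the Galois group commutes with the Laplacian. -/
noncomputable def picAct [Fintype V] [Fintype E] [Group Δ] [MulAction Δ V] [MulAction Δ E]
    (o t : E → V)
    (ho : ∀ (σ : Δ) (ε : E), o (σ • ε) = σ • o ε)
    (ht : ∀ (σ : Δ) (ε : E), t (σ • ε) = σ • t ε)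
    (σ : Δ) : pic0 o t →+ pic0 o t :=
  QuotientAddGroup.lift (prSub o t)
    ((QuotientAddGroup.mk' (prSub o t)).comp (shiftDiv0 σ))
    (by
      rintro x ⟨D, hD⟩
      rw [AddMonoidHom.mem_ker, AddMonoidHom.comp_apply, QuotientAddGroup.mk'_apply,
        QuotientAddGroup.eq_zero_iff]
      refine ⟨shiftHom σ D, ?_⟩
      show lapHom o t (shiftHom σ D) = (shiftDiv0 σ x : V → ℤ)
      rw [lap_shift o t ho ht σ D, hD]
      rfl)

/-- The `p`-primary subgroup of an additive commutative group. -/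
def primarySub (p : ℕ) (M : Type*) [AddCommGroup M] : AddSubgroup M where
  carrier := {g | ∃ n : ℕ, p ^ n • g = 0}
  zero_mem' := ⟨0, smul_zero _⟩
  add_mem' := by
    rintro a b ⟨m, hm⟩ ⟨n, hn⟩
    refine ⟨m + n, ?_⟩
    have ha : p ^ (m + n) • a = 0 := by
      rw [pow_add, mul_comm, mul_smul, hm, smul_zero]
    have hb : p ^ (m + n) • b = 0 := by
      rw [pow_add, mul_smul, hn, smul_zero]
    rw [smul_add, ha, hb, add_zero]
  neg_mem' := by
    rintro a ⟨n, hn⟩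
    exact ⟨n, by rw [smul_neg, hn, neg_zero]⟩

/-- The action of `σ ∈ Δ` on `A`, the `p`-primary subgroup of `Pic⁰(Y)`. -/
noncomputable def actA (p : ℕ) [Fintype V] [Fintype E] [Group Δ] [MulAction Δ V] [MulAction Δ E]
    (o t : E → V)
    (ho : ∀ (σ : Δ) (ε : E), o (σ • ε) = σ • o ε)
    (ht : ∀ (σ : Δ) (ε : E), t (σ • ε) = σ • t ε)
    (σ : Δ) : primarySub p (pic0 o t) →+ primarySub p (pic0 o t) :=
  AddMonoidHom.mk'
    (fun x => ⟨picAct o t ho ht σ x.1, by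
      obtain ⟨n, hn⟩ := x.2
      exact ⟨n, by rw [← map_nsmul, hn, map_zero]⟩⟩)
    (by intro a b; exact Subtype.ext (map_add (picAct o t ho ht σ) _ _))

/-- The endomorphism of `A` given by the idempotent
`e_ψ = (1/(p−1)) ∑_{σ∈Δ} ψ(σ)σ⁻¹ ∈ ℤ_p[Δ]`.  The `ℤ_p`-scalars act on the finite abelian
`p`-group `A` through their approximations modulo a sufficiently large power of `p`. -/
noncomputable def ePsiHom (p : ℕ) [Fact p.Prime] [Fintype V] [Fintype E] [CommGroup Δ]
    [Fintype Δ] [MulAction Δ V] [MulAction Δ E]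
    (o t : E → V)
    (ho : ∀ (σ : Δ) (ε : E), o (σ • ε) = σ • o ε)
    (ht : ∀ (σ : Δ) (ε : E), t (σ • ε) = σ • t ε)
    (ψ : Δ →* ℤ_[p]ˣ) : primarySub p (pic0 o t) →+ primarySub p (pic0 o t) :=
  ∑ σ : Δ,
    ((Ring.inverse ((p : ℤ_[p]) - 1) * (ψ σ : ℤ_[p])).appr
        (Nat.card (primarySub p (pic0 o t)))) • actA p o t ho ht σ⁻¹

/-- The matrix of the Laplacian operator with respect to the `ℤ[Δ]`-basis `(w 1, …, w g)`
of `Div(Y)`. -/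
noncomputable def lapMat [Fintype E] [CommGroup Δ] [Fintype Δ] [MulAction Δ V]
    (o t : E → V) (g : ℕ) (w : Fin g → V) :
    Matrix (Fin g) (Fin g) (MonoidAlgebra ℤ Δ) :=
  Matrix.of fun i j =>
    (if i = j then (valCnt o (w i) : MonoidAlgebra ℤ Δ) else 0)
    - ∑ σ : Δ, MonoidAlgebra.single σ⁻¹ ((edgeCnt o t (w i) (σ • w j) : ℤ))

/-- The ring morphism `ℤ[Δ] → ℤ_p` induced by a `ℤ_p`-valued character `ψ` of `Δ`. -/
noncomputable def psiRingHom (p : ℕ) [Fact p.Prime] [CommGroup Δ] (ψ : Δ →* ℤ_[p]ˣ) :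
    MonoidAlgebra ℤ Δ →+* ℤ_[p] :=
  (MonoidAlgebra.lift ℤ ℤ_[p] Δ ((Units.coeHom ℤ_[p]).comp ψ)).toRingHom

end GraphScaffold

section QuotientGraph

variable {Δ V E : Type} [Group Δ] [MulAction Δ V] [MulAction Δ E]

/-- The map on orbit spaces induced by an equivariant map, e.g. the origin/terminus maps
of the quotient graph `X = Y/Δ`. -/
def quotMap (o : E → V) (ho : ∀ (σ : Δ) (ε : E), o (σ • ε) = σ • o ε) :
    Quotient (MulAction.orbitRel Δ E) → Quotient (MulAction.orbitRel Δ V) :=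
  Quotient.map o (by
    rintro a b h
    obtain ⟨σ, hσ⟩ := h
    exact MulAction.mem_orbit_iff.mpr ⟨σ, by rw [← hσ, ho]⟩)

end QuotientGraph


section AuxZar

set_option linter.unusedSectionVars false

open MulAction
open scoped Classical

variable {Δ V E : Type} [CommGroup Δ] [Fintype Δ] [Fintype V] [Fintype E]
  [MulAction Δ V] [MulAction Δ E]
  [Fintype (Quotient (MulAction.orbitRel Δ V))]
  [Fintype (Quotient (MulAction.orbitRel Δ E))]

theorem quot_mk_eq_iff {W : Type} [MulAction Δ W] (a b : W) :
    Quotient.mk (MulAction.orbitRel Δ W) a = Quotient.mk _ b ↔ ∃ σ : Δ, σ • b = a := by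
  rw [Quotient.eq, MulAction.orbitRel_apply]; exact MulAction.mem_orbit_iff

theorem free_cancel {W : Type} [MulAction Δ W]
    (hfree : ∀ {σ : Δ} {w : W}, σ • w = w → σ = 1)
    {σ τ : Δ} {u : W} (h : σ • u = τ • u) : σ = τ := by
  have : (τ⁻¹ * σ) • u = u := by rw [mul_smul, h, inv_smul_smul]
  have := hfree this
  rwa [inv_mul_eq_one, eq_comm] at this

/-- Each fiber of the orbit map of a free action is a `Δ`-torsor. -/
noncomputable def vEquiv {W : Type} [MulAction Δ W]
    (hfree : ∀ {σ : Δ} {w : W}, σ • w = w → σ = 1) (u : W) :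
    Δ ≃ {w : W // Quotient.mk (MulAction.orbitRel Δ W) w = Quotient.mk _ u} := by
  refine Equiv.ofBijective (fun σ => ⟨σ • u, (quot_mk_eq_iff _ _).mpr ⟨σ, rfl⟩⟩) ⟨?_, ?_⟩
  · intro σ τ h
    exact free_cancel hfree (congrArg Subtype.val h)
  · rintro ⟨v, hv⟩
    obtain ⟨σ, hσ⟩ := (quot_mk_eq_iff _ _).mp hv
    exact ⟨σ, Subtype.ext hσ⟩

theorem sum_ite_mk {W : Type} [MulAction Δ W] [Fintype W]
    (hfree : ∀ {σ : Δ} {w : W}, σ • w = w → σ = 1) (u : W) (D : W → ℤ) :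
    (∑ v : W, if Quotient.mk (MulAction.orbitRel Δ W) v = Quotient.mk _ u then D v else 0)
      = ∑ σ : Δ, D (σ • u) := by
  classical
  rw [← Finset.sum_filter]
  refine (Finset.sum_bij (fun (σ : Δ) _ => σ • u) ?_ ?_ ?_ ?_).symm
  · intro σ _
    simp only [Finset.mem_filter, Finset.mem_univ, true_and]
    exact (quot_mk_eq_iff _ _).mpr ⟨σ, rfl⟩
  · intro σ _ τ _ h
    exact free_cancel hfree h
  · intro v hv
    simp only [Finset.mem_filter, Finset.mem_univ, true_and] at hv
    obtain ⟨σ, hσ⟩ := (quot_mk_eq_iff _ _).mp hv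
    exact ⟨σ, Finset.mem_univ σ, hσ⟩
  · intro σ _
    rfl

/-- Pullback of divisors along the quotient map. -/
def piUp : (Quotient (MulAction.orbitRel Δ V) → ℤ) →+ (V → ℤ) :=
  AddMonoidHom.mk' (fun f v => f (Quotient.mk _ v)) (fun _ _ => rfl)

/-- Pushforward of divisors along the quotient map. -/
noncomputable def piSt : (V → ℤ) →+ (Quotient (MulAction.orbitRel Δ V) → ℤ) :=
  AddMonoidHom.mk'
    (fun D x => ∑ v : V, if Quotient.mk (MulAction.orbitRel Δ V) v = x then D v else 0)
    (by
      intro a b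
      funext x
      simp only [Pi.add_apply]
      rw [← Finset.sum_add_distrib]
      congr 1; funext v; split <;> simp)

theorem piUp_injective : Function.Injective (piUp (Δ := Δ) (V := V)) := by
  intro f g h
  funext x
  induction x using Quotient.ind with
  | _ v => exact congrFun h v

theorem piSt_piUp (hfree : ∀ {σ : Δ} {v : V}, σ • v = v → σ = 1)
    (f : Quotient (MulAction.orbitRel Δ V) → ℤ) (x : Quotient (MulAction.orbitRel Δ V)) :
    piSt (piUp f) x = (Fintype.card Δ : ℤ) * f x := by
  show (∑ v : V, if Quotient.mk (MulAction.orbitRel Δ V) v = x then f (Quotient.mk _ v) else 0)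
      = _
  have h1 : ∀ v : V, (if Quotient.mk (MulAction.orbitRel Δ V) v = x then f (Quotient.mk _ v)
      else 0) = if Quotient.mk (MulAction.orbitRel Δ V) v = x then f x else 0 := by
    intro v; split
    · next h => rw [h]
    · rfl
  rw [Finset.sum_congr rfl (fun v _ => h1 v), ← Finset.sum_filter, Finset.sum_const]
  have hcard : (Finset.univ.filter
      fun v : V => Quotient.mk (MulAction.orbitRel Δ V) v = x).card = Fintype.card Δ := by
    rw [← Fintype.card_subtype]
    have hx : Quotient.mk (MulAction.orbitRel Δ V) (Quotient.out x) = x := Quotient.out_eq x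
    rw [← hx, ← Fintype.card_congr (vEquiv hfree (Quotient.out x))]
  rw [hcard, nsmul_eq_mul]

theorem deg_piSt (D : V → ℤ) :
    ∑ x : Quotient (MulAction.orbitRel Δ V), piSt (Δ := Δ) D x = ∑ v : V, D v := by
  show (∑ x : Quotient (MulAction.orbitRel Δ V), ∑ v : V,
      if Quotient.mk (MulAction.orbitRel Δ V) v = x then D v else 0) = _
  rw [Finset.sum_comm]
  refine Finset.sum_congr rfl fun v _ => ?_
  rw [Finset.sum_ite_eq]
  simp

theorem natCard_ite {α : Type} [Fintype α] (P : α → Prop) :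
    ((Nat.card {x // P x} : ℤ)) = ∑ x : α, if P x then (1 : ℤ) else 0 := by
  classical
  rw [Nat.card_eq_fintype_card, Fintype.card_subtype, Finset.card_filter]
  push_cast
  rfl

theorem quotMap_mk (o : E → V) (ho : ∀ (σ : Δ) (ε : E), o (σ • ε) = σ • o ε) (ε : E) :
    quotMap o ho (Quotient.mk _ ε) = Quotient.mk _ (o ε) := rfl

theorem valCnt_quot (hfree : ∀ {σ : Δ} {v : V}, σ • v = v → σ = 1)
    (o : E → V) (ho : ∀ (σ : Δ) (ε : E), o (σ • ε) = σ • o ε) (u : V) :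
    valCnt (quotMap o ho) (Quotient.mk _ u) = valCnt o u := by
  unfold valCnt
  congr 1
  refine (Nat.card_congr (Equiv.ofBijective
    (fun x : {ε : E // o ε = u} => (⟨Quotient.mk _ x.1, by
      rw [quotMap_mk, x.2]⟩ : {e // quotMap o ho e = Quotient.mk _ u})) ⟨?_, ?_⟩)).symm
  · rintro ⟨ε, hε⟩ ⟨ε', hε'⟩ h
    obtain ⟨σ, hσ⟩ := (quot_mk_eq_iff (Δ := Δ) ε ε').mp (congrArg Subtype.val h)
    have h3 : o (σ • ε') = o ε := congrArg o hσ
    rw [ho, hε', hε] at h3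
    have hσ1 : σ = 1 := hfree h3
    have : ε' = ε := by rw [← hσ, hσ1, one_smul]
    exact Subtype.ext this.symm
  · rintro ⟨e, he⟩
    obtain ⟨ε₀, rfl⟩ := Quotient.exists_rep e
    rw [quotMap_mk] at he
    obtain ⟨σ, hσ⟩ := (quot_mk_eq_iff _ _).mp he
    refine ⟨⟨σ⁻¹ • ε₀, by rw [ho, ← hσ, inv_smul_smul]⟩, ?_⟩
    refine Subtype.ext ?_
    exact (quot_mk_eq_iff _ _).mpr ⟨σ⁻¹, rfl⟩

theorem edge_sum_quot (hfree : ∀ {σ : Δ} {v : V}, σ • v = v → σ = 1)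
    (o t : E → V)
    (ho : ∀ (σ : Δ) (ε : E), o (σ • ε) = σ • o ε)
    (ht : ∀ (σ : Δ) (ε : E), t (σ • ε) = σ • t ε)
    (u : V) (f : Quotient (MulAction.orbitRel Δ V) → ℤ) :
    ∑ v : V, edgeCnt o t u v * f (Quotient.mk _ v)
      = ∑ y : Quotient (MulAction.orbitRel Δ V),
          edgeCnt (quotMap o ho) (quotMap t ht) (Quotient.mk _ u) y * f y := by
  classical
  have hfreeE : ∀ {σ : Δ} {ε : E}, σ • ε = ε → σ = 1 := by
    intro σ ε h
    have : σ • o ε = o ε := by rw [← ho, h]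
    exact hfree this
  -- rewrite LHS as a sum over E
  have hL : ∑ v : V, edgeCnt o t u v * f (Quotient.mk _ v)
      = ∑ ε : E, if t ε = u then f (Quotient.mk _ (o ε)) else 0 := by
    unfold edgeCnt
    have h1 : ∀ v : V, (Nat.card {ε : E // o ε = v ∧ t ε = u} : ℤ) * f (Quotient.mk _ v)
        = ∑ ε : E, if o ε = v ∧ t ε = u then f (Quotient.mk _ v) else 0 := by
      intro v
      rw [natCard_ite, Finset.sum_mul]
      refine Finset.sum_congr rfl fun ε _ => ?_
      split <;> simp
    rw [Finset.sum_congr rfl (fun v _ => h1 v), Finset.sum_comm]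
    refine Finset.sum_congr rfl fun ε _ => ?_
    by_cases h : t ε = u
    · simp only [h, and_true]
      rw [Finset.sum_ite_eq]
      simp
    · simp [h]
  -- rewrite RHS as a sum over the edge quotient
  have hR : ∑ y : Quotient (MulAction.orbitRel Δ V),
        edgeCnt (quotMap o ho) (quotMap t ht) (Quotient.mk _ u) y * f y
      = ∑ e : Quotient (MulAction.orbitRel Δ E),
          if quotMap t ht e = Quotient.mk _ u then f (quotMap o ho e) else 0 := by
    unfold edgeCnt
    have h1 : ∀ y, (Nat.card {e // quotMap o ho e = y ∧
          quotMap t ht e = Quotient.mk (MulAction.orbitRel Δ V) u} : ℤ) * f y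
        = ∑ e : Quotient (MulAction.orbitRel Δ E),
            if quotMap o ho e = y ∧ quotMap t ht e = Quotient.mk _ u then f y else 0 := by
      intro y
      rw [natCard_ite, Finset.sum_mul]
      refine Finset.sum_congr rfl fun e _ => ?_
      split <;> simp
    rw [Finset.sum_congr rfl (fun y _ => h1 y), Finset.sum_comm]
    refine Finset.sum_congr rfl fun e _ => ?_
    by_cases h : quotMap t ht e = Quotient.mk _ u
    · simp only [h, and_true]
      rw [Finset.sum_ite_eq]
      simp
    · simp [h]
  rw [hL, hR]
  -- now group the sum over E by fibers of the edge quotient map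
  rw [← Fintype.sum_fiberwise (fun ε : E => Quotient.mk (MulAction.orbitRel Δ E) ε)
    (fun ε => if t ε = u then f (Quotient.mk _ (o ε)) else 0)]
  refine Finset.sum_congr rfl fun e _ => ?_
  obtain ⟨ε₀, rfl⟩ := Quotient.exists_rep e
  have hfib : (∑ x : {ε : E // Quotient.mk (MulAction.orbitRel Δ E) ε = Quotient.mk _ ε₀},
        if t x.1 = u then f (Quotient.mk _ (o x.1)) else 0)
      = ∑ σ : Δ, if σ • t ε₀ = u then f (Quotient.mk _ (o ε₀)) else 0 := by
    refine (Fintype.sum_equiv (vEquiv hfreeE ε₀)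
      (fun σ => if σ • t ε₀ = u then f (Quotient.mk _ (o ε₀)) else 0)
      (fun x => if t x.1 = u then f (Quotient.mk _ (o x.1)) else 0)
      (fun σ => ?_)).symm
    show (if σ • t ε₀ = u then f (Quotient.mk _ (o ε₀)) else 0)
        = if t (σ • ε₀) = u then f (Quotient.mk _ (o (σ • ε₀))) else 0
    rw [ht, ho]
    have hoo : Quotient.mk (MulAction.orbitRel Δ V) (σ • o ε₀) = Quotient.mk _ (o ε₀) :=
      (quot_mk_eq_iff _ _).mpr ⟨σ, rfl⟩
    rw [hoo]
  rw [hfib]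
  by_cases h : quotMap t ht (Quotient.mk _ ε₀) = Quotient.mk (MulAction.orbitRel Δ V) u
  · rw [if_pos h]
    rw [quotMap_mk] at h
    obtain ⟨τ, hτ⟩ := (quot_mk_eq_iff _ _).mp h
    have hcond : ∀ σ : Δ, (σ • t ε₀ = u) ↔ (σ = τ⁻¹) := by
      intro σ
      constructor
      · intro hs
        have h5 : (τ * σ) • t ε₀ = t ε₀ := by
          rw [mul_smul, hs, hτ]
        have h6 := hfree h5
        rw [mul_eq_one_iff_inv_eq] at h6
        exact h6.symm
      · rintro rfl
        rw [← hτ, inv_smul_smul]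
    simp only [hcond]
    rw [Finset.sum_ite_eq']
    simp only [Finset.mem_univ, if_true]
    rfl
  · rw [if_neg h]
    refine Finset.sum_eq_zero fun σ _ => ?_
    rw [if_neg]
    intro hs
    refine h ?_
    rw [quotMap_mk]
    exact (quot_mk_eq_iff _ _).mpr ⟨σ⁻¹, by rw [← hs, inv_smul_smul]⟩

theorem lap_piUp (hfree : ∀ {σ : Δ} {v : V}, σ • v = v → σ = 1)
    (o t : E → V)
    (ho : ∀ (σ : Δ) (ε : E), o (σ • ε) = σ • o ε)
    (ht : ∀ (σ : Δ) (ε : E), t (σ • ε) = σ • t ε)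
    (f : Quotient (MulAction.orbitRel Δ V) → ℤ) :
    lapHom o t (piUp f) = piUp (lapHom (quotMap o ho) (quotMap t ht) f) := by
  funext u
  show valCnt o u * f (Quotient.mk _ u) - ∑ v : V, edgeCnt o t u v * f (Quotient.mk _ v)
      = valCnt (quotMap o ho) (Quotient.mk _ u) * f (Quotient.mk _ u)
        - ∑ y, edgeCnt (quotMap o ho) (quotMap t ht) (Quotient.mk _ u) y * f y
  rw [valCnt_quot hfree o ho u, edge_sum_quot hfree o t ho ht u f]

theorem piUp_piSt_shift (hfree : ∀ {σ : Δ} {v : V}, σ • v = v → σ = 1) (D : V → ℤ) :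
    piUp (piSt (Δ := Δ) D) = ∑ σ : Δ, shiftHom σ D := by
  funext u
  rw [Finset.sum_apply]
  show (∑ v : V, if Quotient.mk (MulAction.orbitRel Δ V) v = Quotient.mk _ u then D v else 0)
      = ∑ σ : Δ, D (σ⁻¹ • u)
  rw [sum_ite_mk hfree u D]
  exact Fintype.sum_equiv (Equiv.inv Δ) _ _ (fun σ => by rw [Equiv.inv_apply, inv_inv])

theorem piSt_lap (hfree : ∀ {σ : Δ} {v : V}, σ • v = v → σ = 1)
    (o t : E → V)
    (ho : ∀ (σ : Δ) (ε : E), o (σ • ε) = σ • o ε)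
    (ht : ∀ (σ : Δ) (ε : E), t (σ • ε) = σ • t ε)
    (C : V → ℤ) :
    piSt (Δ := Δ) (lapHom o t C) = lapHom (quotMap o ho) (quotMap t ht) (piSt C) := by
  apply piUp_injective (Δ := Δ)
  rw [← lap_piUp hfree o t ho ht (piSt C)]
  rw [piUp_piSt_shift hfree, piUp_piSt_shift hfree, map_sum]
  exact Finset.sum_congr rfl fun σ _ => (lap_shift o t ho ht σ C).symm

/-- Pushforward on degree zero divisors. -/
noncomputable def piStD : div0 V →+ div0 (Quotient (MulAction.orbitRel Δ V)) :=
  AddMonoidHom.mk' (fun D => ⟨piSt D.1, by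
    have h2 : ∑ v : V, (D : V → ℤ) v = 0 := D.2
    show degHom _ = 0
    show (∑ x : Quotient (MulAction.orbitRel Δ V), piSt (Δ := Δ) (D : V → ℤ) x) = 0
    rw [deg_piSt]
    exact h2⟩)
    (fun a b => Subtype.ext (map_add (piSt (Δ := Δ)) a.1 b.1))

/-- Pullback on degree zero divisors. -/
noncomputable def piUpD (hfree : ∀ {σ : Δ} {v : V}, σ • v = v → σ = 1) :
    div0 (Quotient (MulAction.orbitRel Δ V)) →+ div0 V :=
  AddMonoidHom.mk' (fun f => ⟨piUp f.1, by
    have h3 : ∑ x, (f : Quotient (MulAction.orbitRel Δ V) → ℤ) x = 0 := f.2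
    show degHom _ = 0
    show (∑ v : V, piUp (f : Quotient (MulAction.orbitRel Δ V) → ℤ) v) = 0
    rw [← deg_piSt (Δ := Δ) (piUp f.1)]
    rw [Finset.sum_congr rfl (fun x _ => piSt_piUp hfree f.1 x), ← Finset.mul_sum, h3, mul_zero]⟩)
    (fun a b => Subtype.ext (map_add piUp a.1 b.1))

/-- Pushforward on `Pic⁰`. -/
noncomputable def Fpic (hfree : ∀ {σ : Δ} {v : V}, σ • v = v → σ = 1)
    (o t : E → V)
    (ho : ∀ (σ : Δ) (ε : E), o (σ • ε) = σ • o ε)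
    (ht : ∀ (σ : Δ) (ε : E), t (σ • ε) = σ • t ε) :
    pic0 o t →+ pic0 (quotMap o ho) (quotMap t ht) :=
  QuotientAddGroup.lift (prSub o t)
    ((QuotientAddGroup.mk' (prSub (quotMap o ho) (quotMap t ht))).comp piStD)
    (by
      rintro x ⟨D, hD⟩
      rw [AddMonoidHom.mem_ker, AddMonoidHom.comp_apply, QuotientAddGroup.mk'_apply,
        QuotientAddGroup.eq_zero_iff]
      refine ⟨piSt D, ?_⟩
      show lapHom (quotMap o ho) (quotMap t ht) (piSt D) = piSt (Δ := Δ) (x : V → ℤ)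
      rw [← piSt_lap hfree o t ho ht D]
      exact congrArg _ hD)

/-- Pullback on `Pic⁰`. -/
noncomputable def Gpic (hfree : ∀ {σ : Δ} {v : V}, σ • v = v → σ = 1)
    (o t : E → V)
    (ho : ∀ (σ : Δ) (ε : E), o (σ • ε) = σ • o ε)
    (ht : ∀ (σ : Δ) (ε : E), t (σ • ε) = σ • t ε) :
    pic0 (quotMap o ho) (quotMap t ht) →+ pic0 o t :=
  QuotientAddGroup.lift (prSub (quotMap o ho) (quotMap t ht))
    ((QuotientAddGroup.mk' (prSub o t)).comp (piUpD hfree))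
    (by
      rintro x ⟨g, hg⟩
      rw [AddMonoidHom.mem_ker, AddMonoidHom.comp_apply, QuotientAddGroup.mk'_apply,
        QuotientAddGroup.eq_zero_iff]
      refine ⟨piUp g, ?_⟩
      show lapHom o t (piUp g) = piUp (x : Quotient (MulAction.orbitRel Δ V) → ℤ)
      rw [lap_piUp hfree o t ho ht g]
      exact congrArg _ hg)

theorem Fpic_Gpic (hfree : ∀ {σ : Δ} {v : V}, σ • v = v → σ = 1)
    (o t : E → V)
    (ho : ∀ (σ : Δ) (ε : E), o (σ • ε) = σ • o ε)
    (ht : ∀ (σ : Δ) (ε : E), t (σ • ε) = σ • t ε)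
    (y : pic0 (quotMap o ho) (quotMap t ht)) :
    Fpic hfree o t ho ht (Gpic hfree o t ho ht y) = (Fintype.card Δ) • y := by
  induction y using QuotientAddGroup.induction_on with
  | _ f =>
    have h1 : piStD (piUpD (Δ := Δ) hfree f) = (Fintype.card Δ) • f := by
      refine Subtype.ext ?_
      funext x
      show piSt (Δ := Δ) (piUp (f : Quotient (MulAction.orbitRel Δ V) → ℤ)) x = _
      rw [piSt_piUp hfree]
      have : ((((Fintype.card Δ) • f) : div0 (Quotient (MulAction.orbitRel Δ V)))
          : Quotient (MulAction.orbitRel Δ V) → ℤ) x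
          = (Fintype.card Δ) • ((f : Quotient (MulAction.orbitRel Δ V) → ℤ) x) := rfl
      rw [this, nsmul_eq_mul]
    show QuotientAddGroup.mk' _ (piStD (piUpD hfree f)) = _
    rw [h1, map_nsmul]
    rfl

theorem Gpic_Fpic (hfree : ∀ {σ : Δ} {v : V}, σ • v = v → σ = 1)
    (o t : E → V)
    (ho : ∀ (σ : Δ) (ε : E), o (σ • ε) = σ • o ε)
    (ht : ∀ (σ : Δ) (ε : E), t (σ • ε) = σ • t ε)
    (x : pic0 o t) :
    Gpic hfree o t ho ht (Fpic hfree o t ho ht x) = ∑ σ : Δ, picAct o t ho ht σ x := by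
  induction x using QuotientAddGroup.induction_on with
  | _ D =>
    have h1 : piUpD (Δ := Δ) hfree (piStD D) = ∑ σ : Δ, shiftDiv0 σ D := by
      refine Subtype.ext ?_
      have h2 : ((∑ σ : Δ, shiftDiv0 σ D : div0 V) : V → ℤ)
          = ∑ σ : Δ, ((shiftDiv0 σ D : div0 V) : V → ℤ) :=
        map_sum (div0 V).subtype _ _
      rw [h2]
      show piUp (piSt (Δ := Δ) (D : V → ℤ)) = _
      rw [piUp_piSt_shift hfree]
      rfl
    show QuotientAddGroup.mk' _ (piUpD hfree (piStD D)) = _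
    rw [h1, map_sum]
    rfl

/-- The map induced on `p`-primary subgroups by a group homomorphism. -/
def primMap (p : ℕ) {M N : Type} [AddCommGroup M] [AddCommGroup N] (φ : M →+ N) :
    primarySub p M →+ primarySub p N :=
  AddMonoidHom.mk'
    (fun x => ⟨φ x.1, by
      obtain ⟨n, hn⟩ := x.2
      exact ⟨n, by rw [← map_nsmul, hn, map_zero]⟩⟩)
    (fun a b => Subtype.ext (map_add φ _ _))

theorem exists_nsmul_inv {M : Type} [AddCommGroup M] {q n : ℕ} (hq : 1 < q)
    (hco : Nat.Coprime n q) {a : M} (ha : q • a = 0) : ∃ m : ℕ, n • m • a = a := by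
  obtain ⟨m, -, hm⟩ := Nat.exists_mul_mod_eq_one_of_coprime hco hq
  refine ⟨m, ?_⟩
  rw [smul_smul]
  have hdecomp : n * m = q * (n * m / q) + 1 := by
    conv_lhs => rw [← Nat.div_add_mod (n * m) q]
    rw [hm]
  rw [hdecomp, add_nsmul, one_nsmul, mul_comm q, mul_nsmul, smul_comm, ha, smul_zero, zero_add]

theorem appr_unit_not_dvd (p : ℕ) [Fact p.Prime] {x : ℤ_[p]} (hx : IsUnit x) {K : ℕ}
    (hK : K ≠ 0) : ¬ (p ∣ x.appr K) := by
  intro hdvd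
  have hs := PadicInt.appr_spec K x
  rw [Ideal.mem_span_singleton] at hs
  obtain ⟨z, hz⟩ := hs
  have h0 : PadicInt.toZMod x = 0 := by
    have hxe : x = (x.appr K : ℤ_[p]) + (p : ℤ_[p]) ^ K * z := by rw [← hz]; ring
    obtain ⟨c, hc⟩ := hdvd
    rw [hxe, hc, map_add, map_mul, map_pow, map_natCast, map_natCast]
    push_cast
    simp [ZMod.natCast_self, zero_pow hK]
  have h2 := hx.map (PadicInt.toZMod (p := p))
  rw [h0] at h2
  haveI : Fact (1 < p) := ⟨(Fact.out : p.Prime).one_lt⟩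
  exact not_isUnit_zero h2

theorem isUnit_p_sub_one (p : ℕ) [Fact p.Prime] : IsUnit ((p : ℤ_[p]) - 1) := by
  have h : ((p : ℤ_[p]) - 1) = (((p : ℤ) - 1 : ℤ) : ℤ_[p]) := by push_cast; ring
  rw [h, PadicInt.isUnit_iff]
  refine le_antisymm (PadicInt.norm_le_one _) ?_
  by_contra hlt
  push_neg at hlt
  rw [PadicInt.norm_int_lt_one_iff_dvd] at hlt
  have hp := (Fact.out : p.Prime).two_le
  have h2 : (p : ℤ) ∣ 1 := by
    have := dvd_sub (dvd_refl (p : ℤ)) hlt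
    simpa using this
  have := Int.le_of_dvd one_pos h2
  omega

theorem primary_finite (p : ℕ) [Fact p.Prime] {M : Type} [AddCommGroup M]
    [Module.Finite ℤ M] : Finite (primarySub p M) := by
  haveI h1 : Module.Finite ℤ (AddSubgroup.toIntSubmodule (primarySub p M)) :=
    Module.Finite.iff_fg.mpr (IsNoetherian.noetherian _)
  haveI h2 : AddGroup.FG (AddSubgroup.toIntSubmodule (primarySub p M)) :=
    Module.Finite.iff_addGroup_fg.mp h1
  haveI h3 : AddGroup.FG (primarySub p M) := h2
  refine AddCommGroup.finite_of_fg_torsion _ ?_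
  intro a
  obtain ⟨n, hn⟩ := a.2
  refine isOfFinAddOrder_iff_nsmul_eq_zero.mpr ⟨p ^ n, pow_pos (Fact.out : p.Prime).pos n, ?_⟩
  refine Subtype.ext ?_
  show p ^ n • (a : M) = 0
  exact hn

end AuxZar

/-- the trivial character component.  Let `p` be an odd prime and `Y/X`
a Galois cover of finite connected graphs with Galois group `Δ ≅ 𝔽_p^×`, with `A` the
`p`-primary subgroup of `Pic⁰(Y)`.  For the trivial character `ψ₀ = 1`, the component
`e_{ψ₀}A` is isomorphic as a `ℤ_p`-module (equivalently, as an abelian group) to the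
`p`-primary subgroup of `Pic⁰(X)`, where `X` is the quotient graph; in particular
`#e_{ψ₀}A` equals `κ_p(X) = #Pic⁰_p(X)`, the `p`-part of the number of spanning trees of
`X`. -/
theorem statement19 (p : ℕ) [Fact p.Prime] (hodd : Odd p)
    {Δ V E : Type} [CommGroup Δ] [Fintype Δ] [Fintype V] [Fintype E]
    [MulAction Δ V] [MulAction Δ E]
    [Fintype (Quotient (MulAction.orbitRel Δ V))]
    [Fintype (Quotient (MulAction.orbitRel Δ E))]
    (hΔ : Nonempty (Δ ≃* (ZMod p)ˣ))
    (o t : E → V) (bar : E → E)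
    (hbar : ∀ ε, bar (bar ε) = ε)
    (hob : ∀ ε, o (bar ε) = t ε) (htb : ∀ ε, t (bar ε) = o ε)
    (ho : ∀ (σ : Δ) (ε : E), o (σ • ε) = σ • o ε)
    (ht : ∀ (σ : Δ) (ε : E), t (σ • ε) = σ • t ε)
    (hconn : ∀ u v : V, Relation.ReflTransGen (fun x y => ∃ ε : E, o ε = x ∧ t ε = y) u v)
    (g : ℕ) (w : Fin g → V)
    (hbasis : ∀ v : V, ∃! q : Fin g × Δ, q.2 • w q.1 = v) :
    Nonempty ((ePsiHom p o t ho ht (1 : Δ →* ℤ_[p]ˣ)).range ≃+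
        primarySub p (pic0 (quotMap o ho) (quotMap t ht))) ∧
    Nat.card (ePsiHom p o t ho ht (1 : Δ →* ℤ_[p]ˣ)).range
      = Nat.card (primarySub p (pic0 (quotMap o ho) (quotMap t ht))) := by
  classical
  have hp : p.Prime := Fact.out
  -- the action on vertices is free
  have hfree : ∀ {σ : Δ} {v : V}, σ • v = v → σ = 1 := by
    intro σ v h
    obtain ⟨⟨i, τ⟩, h1, h2⟩ := hbasis v
    have h3 : ((i, σ * τ) : Fin g × Δ).2 • w ((i, σ * τ) : Fin g × Δ).1 = v := by
      show (σ * τ) • w i = v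
      rw [mul_smul]
      show σ • ((i, τ) : Fin g × Δ).2 • w ((i, τ) : Fin g × Δ).1 = v
      rw [h1, h]
    have h4 := h2 _ h3
    have h5 : σ * τ = τ := congrArg Prod.snd h4
    rwa [mul_eq_right] at h5
  -- the cardinality of Δ is p - 1, hence prime to p
  have hΔnotdvd : ¬ p ∣ Fintype.card Δ := by
    obtain ⟨e⟩ := hΔ
    rw [Fintype.card_congr e.toEquiv, ZMod.card_units]
    intro hdvd
    have h2 : p - 1 ≠ 0 := by have := hp.two_le; omega
    have := Nat.le_of_dvd (Nat.pos_of_ne_zero h2) hdvd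
    have := hp.two_le
    omega
  -- finiteness of A
  haveI hfin1 : Module.Finite ℤ (AddSubgroup.toIntSubmodule (div0 V)) :=
    Module.Finite.iff_fg.mpr (IsNoetherian.noetherian _)
  haveI hfin2 : Module.Finite ℤ (div0 V) := hfin1
  haveI hfin3 : Module.Finite ℤ (pic0 o t) :=
    Module.Finite.of_surjective (QuotientAddGroup.mk' (prSub o t)).toIntLinearMap
      (QuotientAddGroup.mk'_surjective _)
  haveI hAfin : Finite (primarySub p (pic0 o t)) := primary_finite p
  haveI hAne : Nonempty (primarySub p (pic0 o t)) := ⟨0⟩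
  have hK : Nat.card (primarySub p (pic0 o t)) ≠ 0 := Nat.card_pos.ne'
  -- inverting integers prime to p on primary subgroups
  have key : ∀ (M : Type) [AddCommGroup M] (x : primarySub p M) (n : ℕ), ¬ p ∣ n →
      ∃ m : ℕ, n • m • x = x := by
    intro M _ x n hn
    obtain ⟨k, hk⟩ := x.2
    by_cases hk0 : k = 0
    · subst hk0
      have hx0 : x = 0 := Subtype.ext (by simpa using hk)
      exact ⟨0, by simp [hx0]⟩
    · have hq : 1 < p ^ k := Nat.one_lt_pow hk0 hp.one_lt
      have hco : n.Coprime (p ^ k) :=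
        Nat.Coprime.pow_right k ((hp.coprime_iff_not_dvd.mpr hn).symm)
      have ha : (p ^ k) • x = 0 := Subtype.ext (by simpa using hk)
      exact exists_nsmul_inv hq hco ha
  -- the coefficient of the trivial idempotent is prime to p
  have hunit : IsUnit (Ring.inverse ((p : ℤ_[p]) - 1)) := by
    obtain ⟨u, hu⟩ := isUnit_p_sub_one p
    rw [← hu, Ring.inverse_unit]
    exact Units.isUnit _
  have hc : ¬ p ∣ (Ring.inverse ((p : ℤ_[p]) - 1)).appr
      (Nat.card (primarySub p (pic0 o t))) := appr_unit_not_dvd p hunit hK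
  -- the pushforward and pullback on primary parts
  set F : primarySub p (pic0 o t) →+ primarySub p (pic0 (quotMap o ho) (quotMap t ht)) :=
    primMap p (Fpic hfree o t ho ht) with hFdef
  set G : primarySub p (pic0 (quotMap o ho) (quotMap t ht)) →+ primarySub p (pic0 o t) :=
    primMap p (Gpic hfree o t ho ht) with hGdef
  set N : primarySub p (pic0 o t) →+ primarySub p (pic0 o t) :=
    ∑ σ : Δ, actA p o t ho ht σ with hNdef
  have hGF : ∀ x : primarySub p (pic0 o t), G (F x) = N x := by
    intro x
    refine Subtype.ext ?_
    show Gpic hfree o t ho ht (Fpic hfree o t ho ht x.1) = (N x).1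
    rw [Gpic_Fpic]
    have hNx : N x = ∑ σ : Δ, actA p o t ho ht σ x :=
      map_sum (AddMonoidHom.eval x) _ Finset.univ
    have h1 : (N x).1 = ∑ σ : Δ, (actA p o t ho ht σ x).1 := by
      rw [hNx]
      exact map_sum (primarySub p (pic0 o t)).subtype _ Finset.univ
    rw [h1]
    exact Finset.sum_congr rfl fun σ _ => rfl
  have hFG : ∀ y : primarySub p (pic0 (quotMap o ho) (quotMap t ht)),
      F (G y) = (Fintype.card Δ) • y := by
    intro y
    refine Subtype.ext ?_
    show Fpic hfree o t ho ht (Gpic hfree o t ho ht y.1) = ((Fintype.card Δ) • y).1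
    rw [Fpic_Gpic]
    rfl
  -- the trivial idempotent is (a unit multiple of) the norm
  have hePsi : ∀ x : primarySub p (pic0 o t), ePsiHom p o t ho ht (1 : Δ →* ℤ_[p]ˣ) x
      = (Ring.inverse ((p : ℤ_[p]) - 1)).appr (Nat.card (primarySub p (pic0 o t))) • N x := by
    intro x
    show (∑ σ : Δ, ((Ring.inverse ((p : ℤ_[p]) - 1) * (((1 : Δ →* ℤ_[p]ˣ) σ : ℤ_[p]ˣ) : ℤ_[p])).appr
        (Nat.card (primarySub p (pic0 o t)))) • actA p o t ho ht σ⁻¹) x = _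
    have h0 : (∑ σ : Δ, ((Ring.inverse ((p : ℤ_[p]) - 1)
          * (((1 : Δ →* ℤ_[p]ˣ) σ : ℤ_[p]ˣ) : ℤ_[p])).appr
          (Nat.card (primarySub p (pic0 o t)))) • actA p o t ho ht σ⁻¹) x
        = ∑ σ : Δ, (((Ring.inverse ((p : ℤ_[p]) - 1)
          * (((1 : Δ →* ℤ_[p]ˣ) σ : ℤ_[p]ˣ) : ℤ_[p])).appr
          (Nat.card (primarySub p (pic0 o t)))) • actA p o t ho ht σ⁻¹) x :=
      map_sum (AddMonoidHom.eval x) _ Finset.univ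
    rw [h0]
    have h1 : ∀ σ : Δ, (((Ring.inverse ((p : ℤ_[p]) - 1)
          * (((1 : Δ →* ℤ_[p]ˣ) σ : ℤ_[p]ˣ) : ℤ_[p])).appr
          (Nat.card (primarySub p (pic0 o t)))) • actA p o t ho ht σ⁻¹) x
        = (Ring.inverse ((p : ℤ_[p]) - 1)).appr (Nat.card (primarySub p (pic0 o t)))
          • actA p o t ho ht σ⁻¹ x := by
      intro σ
      have h2 : (((1 : Δ →* ℤ_[p]ˣ) σ : ℤ_[p]ˣ) : ℤ_[p]) = 1 := rfl
      rw [h2, mul_one]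
      rfl
    rw [Finset.sum_congr rfl fun σ _ => h1 σ, ← Finset.smul_sum]
    congr 1
    have hNx : N x = ∑ σ : Δ, actA p o t ho ht σ x :=
      map_sum (AddMonoidHom.eval x) _ Finset.univ
    rw [hNx]
    exact Fintype.sum_equiv (Equiv.inv Δ) _ _ (fun σ => by rw [Equiv.inv_apply])
  -- range computations
  have hrange : (ePsiHom p o t ho ht (1 : Δ →* ℤ_[p]ˣ)).range = N.range := by
    apply le_antisymm
    · rintro _ ⟨x, rfl⟩
      rw [hePsi x, ← map_nsmul]
      exact ⟨_, rfl⟩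
    · rintro _ ⟨x, rfl⟩
      obtain ⟨m, hm⟩ := key (pic0 o t) (N x) _ hc
      refine ⟨m • x, ?_⟩
      rw [hePsi (m • x), map_nsmul]
      exact hm
  have hGinj : Function.Injective G := by
    intro y1 y2 h
    have h2 : F (G y1) = F (G y2) := congrArg F h
    rw [hFG, hFG] at h2
    have h3 : (Fintype.card Δ) • (y1 - y2) = 0 := by rw [smul_sub, h2, sub_self]
    obtain ⟨m, hm⟩ := key (pic0 (quotMap o ho) (quotMap t ht)) (y1 - y2) _ hΔnotdvd
    have h4 : y1 - y2 = 0 := by rw [← hm, smul_comm, h3, smul_zero]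
    exact sub_eq_zero.mp h4
  have hrange2 : N.range = G.range := by
    apply le_antisymm
    · rintro _ ⟨x, rfl⟩
      exact ⟨F x, hGF x⟩
    · rintro _ ⟨y, rfl⟩
      obtain ⟨m, hm⟩ := key (pic0 (quotMap o ho) (quotMap t ht)) y _ hΔnotdvd
      refine ⟨G (m • y), ?_⟩
      rw [← hGF (G (m • y)), hFG, hm]
  have hre : (ePsiHom p o t ho ht (1 : Δ →* ℤ_[p]ˣ)).range = G.range := hrange.trans hrange2
  have efinal : (ePsiHom p o t ho ht (1 : Δ →* ℤ_[p]ˣ)).range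
      ≃+ primarySub p (pic0 (quotMap o ho) (quotMap t ht)) :=
    (AddEquiv.addSubgroupCongr hre).trans (AddMonoidHom.ofInjective hGinj).symm
  exact ⟨⟨efinal⟩, Nat.card_congr efinal.toEquiv⟩
end
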